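/- arXiv:1101.3099 — 5 statements merged into one kernel-verified Lean document; each statement's English description precedes it below -/
import Mathlib

section
/- For every constant 0 < β < 1/(15·10⁴) there exists an integer n₀ = n₀(β) > 0 such that the following holds: if G₁ is an (n₁, d, β)-quasi-random graph on n₁ ≥ n₀ vertices with d ≥ ln n₁, then G₁ contains a spanning subgraph Γ which is a (βn₁, f_β)-expander and satisfies e(Γ) ≤ 10⁶·β·e(G₁). -/
open Filter Finset SimpleGraph
open scoped Classical

/-- The probability weight of a particular graph `G` on `[n]` under `G(n,p)`. -/
noncomputable def gnpWeight (n : ℕ) (p : ℝ) (G : SimpleGraph (Fin n)) : ℝ :=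
  p ^ G.edgeFinset.card * (1 - p) ^ (n.choose 2 - G.edgeFinset.card)

/-- The probability that a random graph `G ~ G(n,p)` satisfies the predicate `A`. -/
noncomputable def gnpProb (n : ℕ) (p : ℝ) (A : SimpleGraph (Fin n) → Prop) : ℝ :=
  ∑ G : SimpleGraph (Fin n), if A G then gnpWeight n p G else 0

/-- A sequence of graph properties holds with high probability in `G(n, p n)`. -/
def WHP (p : ℕ → ℝ) (A : ∀ n : ℕ, SimpleGraph (Fin n) → Prop) : Prop :=
  Tendsto (fun n => gnpProb n (p n) (A n)) atTop (nhds 1)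

/-- Number of edges of a graph. -/
noncomputable def edgeCount {V : Type*} [Fintype V] (G : SimpleGraph V) : ℕ :=
  G.edgeFinset.card

/-- Number of edges with both endpoints in `U`. -/
noncomputable def eIn {V : Type*} [Fintype V] (G : SimpleGraph V) (U : Finset V) : ℕ :=
  (G.edgeFinset.filter (fun e => ∀ v ∈ e, v ∈ U)).card

/-- Number of edges with one endpoint in `U` and the other in `Z` (for disjoint `U`, `Z`). -/
noncomputable def eBetween {V : Type*} [Fintype V] (G : SimpleGraph V) (U Z : Finset V) : ℕ :=
  ((U ×ˢ Z).filter (fun q => G.Adj q.1 q.2)).card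

/-- External neighbourhood of a vertex set. -/
noncomputable def extNbhd {V : Type*} [Fintype V] (G : SimpleGraph V) (U : Finset V) : Finset V :=
  Finset.univ.filter (fun v => v ∉ U ∧ ∃ u ∈ U, G.Adj u v)

/-- `G` is an `(R, f)`-expander: every set `U` with `|U| ≤ R` satisfies `|N(U)| ≥ f(|U|)·|U|`. -/
def IsExpander {V : Type*} [Fintype V] (G : SimpleGraph V) (R : ℝ) (f : ℕ → ℝ) : Prop :=
  ∀ U : Finset V, U.Nonempty → (U.card : ℝ) ≤ R →
    f U.card * U.card ≤ ((extNbhd G U).card : ℝ)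

/-- The expansion function `f_β` on `{1, …, ⌊β n₁⌋}`. -/
noncomputable def fBeta (β : ℝ) (n1 : ℕ) (t : ℕ) : ℝ :=
  if t = Nat.floor (β * n1) then 2 * (1 + 39 * β) / (3 * β)
  else if (t : ℝ) < (n1 : ℝ) ^ (0.1 : ℝ) then Real.log n1 ^ (0.8 : ℝ)
  else 11

/-- `G₁` is `(n₁, d, β)`-quasi-random. -/
def QuasiRandom {V : Type*} [Fintype V] (G1 : SimpleGraph V) (n1 : ℕ) (d β : ℝ) : Prop :=
  (∀ v : V, d / 150 ≤ (G1.degree v : ℝ)) ∧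
  (∀ U : Finset V, (U.card : ℝ) < (n1 : ℝ) ^ (0.11 : ℝ) * Real.log n1 →
    (eIn G1 U : ℝ) ≤ d ^ (0.13 : ℝ) * U.card) ∧
  (∀ U : Finset V, (U.card : ℝ) < 12 * β * n1 →
    (eIn G1 U : ℝ) ≤ 50 * β * d * U.card) ∧
  (∀ U Z : Finset V, Disjoint U Z → U.card = Nat.floor (β * n1) →
    Z.card = Nat.floor ((1 / 3 - 27 * β) * n1) →
    (n1 : ℝ) * Real.log (Real.log n1) ≤ (eBetween G1 U Z : ℝ))

/-- Longest path length in `G`. -/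
noncomputable def longestPath {V : Type*} [Fintype V] (G : SimpleGraph V) : ℕ :=
  sSup {l : ℕ | ∃ (u v : V) (q : G.Walk u v), q.IsPath ∧ q.length = l}

/-- `{u, v}` is a booster with respect to `Γ`. -/
def IsBooster {V : Type*} [Fintype V] (Γ : SimpleGraph V) (u v : V) : Prop :=
  u ≠ v ∧ ¬ Γ.Adj u v ∧
    ((Γ ⊔ fromEdgeSet {s(u, v)}).IsHamiltonian ∨
      longestPath Γ < longestPath (Γ ⊔ fromEdgeSet {s(u, v)}))

/-- The booster set `B_Γ(v)`. -/
noncomputable def boosterSet {V : Type*} [Fintype V] (Γ : SimpleGraph V) (v : V) : Finset V :=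
  Finset.univ.filter (fun w => IsBooster Γ v w)

/-- Membership in the family `𝓛(n, β)` with witnessing partition `V = V₁ ∪ D`. -/
def InFamilyL (n : ℕ) (β : ℝ) (G : SimpleGraph (Fin n)) (V1 D : Finset (Fin n)) : Prop :=
  Disjoint V1 D ∧ V1 ∪ D = Finset.univ ∧
  ((D.card : ℝ) ≤ (n : ℝ) ^ (0.09 : ℝ)) ∧
  (∀ u ∈ D, 2 ≤ (G.neighborFinset u ∩ V1).card) ∧
  (∀ u ∈ D, ∀ v ∈ D, ∀ q : G.Walk u v, q.IsPath → 0 < q.length →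
    2 * Real.log n / (3 * Real.log (Real.log n)) < (q.length : ℝ)) ∧
  (∀ u ∈ D, ∀ q : G.Walk u u, q.IsCycle →
    2 * Real.log n / (3 * Real.log (Real.log n)) < (q.length : ℝ)) ∧
  IsExpander (G.induce (V1 : Set (Fin n))) (β * V1.card) (fBeta β V1.card)

section AuxLemmas

variable {V : Type*} [Fintype V]

lemma pairCount_eq_sum_degrees (H : SimpleGraph V) (U : Finset V) :
    ((U ×ˢ Finset.univ).filter fun p => H.Adj p.1 p.2).card = ∑ u ∈ U, H.degree u := by
  classical
  rw [Finset.card_eq_sum_card_fiberwise (f := Prod.fst) (t := U) (by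
    intro p hp; simp only [mem_coe, mem_filter, mem_product] at hp; exact hp.1.1)]
  refine Finset.sum_congr rfl fun u hu => ?_
  have hset : ((U ×ˢ Finset.univ).filter fun p => H.Adj p.1 p.2).filter (fun a => a.1 = u)
      = (H.neighborFinset u).image (fun v => (u, v)) := by
    ext ⟨a, b⟩
    simp only [mem_filter, mem_product, mem_univ, and_true, mem_image, mem_neighborFinset]
    constructor
    · rintro ⟨⟨ha, hadj⟩, rfl⟩
      exact ⟨b, hadj, rfl⟩
    · rintro ⟨v, hadj, heq⟩
      obtain ⟨rfl, rfl⟩ : u = a ∧ v = b := Prod.mk.injEq .. ▸ heq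
      exact ⟨⟨hu, hadj⟩, rfl⟩
  rw [hset, Finset.card_image_of_injective _ (fun x y h => by injection h),
    SimpleGraph.degree]

lemma twice_eIn (H : SimpleGraph V) (W : Finset V) :
    ((W ×ˢ W).filter fun p => H.Adj p.1 p.2).card = 2 * eIn H W := by
  classical
  rw [Finset.card_eq_sum_card_fiberwise
    (f := fun p => s(p.1, p.2)) (t := H.edgeFinset.filter (fun e => ∀ v ∈ e, v ∈ W)) (by
      intro p hp
      simp only [mem_coe, mem_filter, mem_product] at hp
      obtain ⟨⟨h1, h2⟩, hadj⟩ := hp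
      simp only [mem_coe, mem_filter, SimpleGraph.mem_edgeFinset, SimpleGraph.mem_edgeSet]
      refine ⟨hadj, ?_⟩
      intro v hv
      rw [Sym2.mem_iff] at hv
      rcases hv with rfl | rfl
      exacts [h1, h2])]
  have : ∀ e ∈ H.edgeFinset.filter (fun e => ∀ v ∈ e, v ∈ W),
      (((W ×ˢ W).filter fun p => H.Adj p.1 p.2).filter (fun p => s(p.1, p.2) = e)).card = 2 := by
    intro e he
    simp only [mem_filter, SimpleGraph.mem_edgeFinset, SimpleGraph.mem_edgeSet] at he
    induction e using Sym2.ind with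
    | _ a b =>
      obtain ⟨hab, hmem⟩ := he
      have haW : a ∈ W := hmem a (by simp)
      have hbW : b ∈ W := hmem b (by simp)
      have hne : a ≠ b := hab.ne
      have hfib : (((W ×ˢ W).filter fun p => H.Adj p.1 p.2).filter
          (fun p => s(p.1, p.2) = s(a, b))) = {(a, b), (b, a)} := by
        ext ⟨x, y⟩
        simp only [mem_filter, mem_product, mem_insert, mem_singleton, Sym2.eq_iff,
          Prod.mk.injEq]
        constructor
        · rintro ⟨⟨-, -⟩, (⟨rfl, rfl⟩ | ⟨rfl, rfl⟩)⟩
          · exact Or.inl ⟨rfl, rfl⟩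
          · exact Or.inr ⟨rfl, rfl⟩
        · rintro (⟨rfl, rfl⟩ | ⟨rfl, rfl⟩)
          · exact ⟨⟨⟨haW, hbW⟩, hab⟩, Or.inl ⟨rfl, rfl⟩⟩
          · exact ⟨⟨⟨hbW, haW⟩, hab.symm⟩, Or.inr ⟨rfl, rfl⟩⟩
      rw [hfib, Finset.card_insert_of_notMem (by simp [hne]), Finset.card_singleton]
  rw [Finset.sum_congr rfl this, Finset.sum_const, smul_eq_mul, mul_comm, eIn]

lemma sum_deg_le (H : SimpleGraph V) (U W : Finset V) (hUW : U ⊆ W)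
    (hW : ∀ u ∈ U, ∀ v, H.Adj u v → v ∈ W) :
    ∑ u ∈ U, H.degree u ≤ eIn H W + eIn H U := by
  classical
  set a := ((U ×ˢ (W \ U)).filter fun p => H.Adj p.1 p.2).card with ha
  set b := ((U ×ˢ U).filter fun p => H.Adj p.1 p.2).card with hb
  have h1 : ((U ×ˢ Finset.univ).filter fun p => H.Adj p.1 p.2)
      = ((U ×ˢ W).filter fun p => H.Adj p.1 p.2) := by
    ext p
    simp only [mem_filter, mem_product, mem_univ, and_true]
    constructor
    · rintro ⟨hp1, hadj⟩
      exact ⟨⟨hp1, hW p.1 hp1 p.2 hadj⟩, hadj⟩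
    · rintro ⟨⟨hp1, -⟩, hadj⟩
      exact ⟨hp1, hadj⟩
  have h2 : ((U ×ˢ W).filter fun p => H.Adj p.1 p.2).card = a + b := by
    rw [← Finset.sdiff_union_of_subset hUW, Finset.product_union, Finset.filter_union,
      Finset.card_union_of_disjoint]
    rw [Finset.disjoint_left]
    rintro p hp hp'
    simp only [mem_filter, mem_product, Finset.mem_sdiff] at hp hp'
    exact hp.1.2.2 hp'.1.2
  have h3 : (((W \ U) ×ˢ U).filter fun p => H.Adj p.1 p.2).card = a := by
    apply Finset.card_bij' (i := fun p _ => p.swap) (j := fun p _ => p.swap)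
    · intro p hp; simp
    · intro p hp; simp
    · intro p hp
      simp only [mem_filter, mem_product, Finset.mem_sdiff] at hp ⊢
      exact ⟨⟨hp.1.2, hp.1.1.1, hp.1.1.2⟩, hp.2.symm⟩
    · intro p hp
      simp only [mem_filter, mem_product, Finset.mem_sdiff] at hp ⊢
      exact ⟨⟨⟨hp.1.2.1, hp.1.2.2⟩, hp.1.1⟩, hp.2.symm⟩
  have h4 : a + (a + b) ≤ 2 * eIn H W := by
    rw [← twice_eIn H W]
    have hsub : (((W \ U) ×ˢ U).filter fun p => H.Adj p.1 p.2)
        ∪ (((U ×ˢ (W \ U)).filter fun p => H.Adj p.1 p.2)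
          ∪ ((U ×ˢ U).filter fun p => H.Adj p.1 p.2))
        ⊆ (W ×ˢ W).filter fun p => H.Adj p.1 p.2 := by
      intro p hp
      simp only [mem_union, mem_filter, mem_product, Finset.mem_sdiff] at hp ⊢
      rcases hp with ⟨⟨h5, h6⟩, h7⟩ | ⟨⟨h5, h6⟩, h7⟩ | ⟨⟨h5, h6⟩, h7⟩
      · exact ⟨⟨h5.1, hUW h6⟩, h7⟩
      · exact ⟨⟨hUW h5, h6.1⟩, h7⟩
      · exact ⟨⟨hUW h5, hUW h6⟩, h7⟩
    calc a + (a + b) = ((((W \ U) ×ˢ U).filter fun p => H.Adj p.1 p.2)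
        ∪ ((((U ×ˢ (W \ U)).filter fun p => H.Adj p.1 p.2))
          ∪ ((U ×ˢ U).filter fun p => H.Adj p.1 p.2))).card := by
          rw [Finset.card_union_of_disjoint, Finset.card_union_of_disjoint, h3]
          · rw [Finset.disjoint_left]
            rintro p hp hp'
            simp only [mem_filter, mem_product, Finset.mem_sdiff] at hp hp'
            exact hp.1.2.2 hp'.1.2
          · rw [Finset.disjoint_left]
            rintro p hp hp'
            simp only [mem_union, mem_filter, mem_product, Finset.mem_sdiff] at hp hp'
            rcases hp' with ⟨⟨h5, -⟩, -⟩ | ⟨⟨h5, -⟩, -⟩ <;> exact hp.1.1.2 h5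
      _ ≤ _ := Finset.card_le_card hsub
  have h5 : b = 2 * eIn H U := twice_eIn H U
  rw [← pairCount_eq_sum_degrees, h1, h2]
  omega

lemma card_edge_le_of_pairs (H : SimpleGraph V) (Q : Finset (V × V))
    (hQ : ∀ a b, H.Adj a b → (a, b) ∈ Q ∨ (b, a) ∈ Q) :
    edgeCount H ≤ Q.card := by
  classical
  rw [edgeCount]
  rcases H.edgeFinset.eq_empty_or_nonempty with he | ⟨e0, he0⟩
  · simp [he]
  obtain ⟨a0, b0⟩ := e0
  have : Inhabited V := ⟨a0⟩
  set f : Sym2 V → V × V := fun e =>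
    if h : ∃ p : V × V, p ∈ Q ∧ s(p.1, p.2) = e then h.choose else default with hf
  have hspec : ∀ e ∈ H.edgeFinset, f e ∈ Q ∧ s((f e).1, (f e).2) = e := by
    intro e he
    induction e using Sym2.ind with
    | _ a b =>
      rw [SimpleGraph.mem_edgeFinset, SimpleGraph.mem_edgeSet] at he
      have hex : ∃ p : V × V, p ∈ Q ∧ s(p.1, p.2) = s(a, b) := by
        rcases hQ a b he with h | h
        · exact ⟨(a, b), h, rfl⟩
        · exact ⟨(b, a), h, Sym2.eq_swap⟩
      rw [hf]
      simp only [dif_pos hex]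
      exact hex.choose_spec
  apply Finset.card_le_card_of_injOn f (fun e he => (hspec e he).1)
  intro e1 he1 e2 he2 heq
  rw [← (hspec e1 he1).2, ← (hspec e2 he2).2, heq]

lemma hitting {α : Type*} [DecidableEq α] (E : Finset α) (L : ℕ) (hL : 0 < L) :
    ∀ (k : ℕ) (F : Finset (Finset α)), (∀ A ∈ F, A ⊆ E ∧ L ≤ A.card) →
    ∃ T ⊆ E, T.card ≤ k ∧
      (F.filter fun A => A ∩ T = ∅).card * E.card ^ k ≤ F.card * (E.card - L) ^ k := by
  classical
  intro k
  induction k with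
  | zero =>
    intro F hF
    exact ⟨∅, Finset.empty_subset _, le_refl 0, by simp⟩
  | succ k ih =>
    intro F hF
    rcases F.eq_empty_or_nonempty with rfl | hFne
    · exact ⟨∅, Finset.empty_subset _, Nat.zero_le _, by simp⟩
    obtain ⟨A0, hA0⟩ := hFne
    have hA0E := (hF A0 hA0).1
    have hA0L := (hF A0 hA0).2
    have hEne : E.Nonempty := by
      obtain ⟨x, hx⟩ := Finset.card_pos.mp (lt_of_lt_of_le hL hA0L)
      exact ⟨x, hA0E hx⟩
    set M := E.card with hM
    have hMpos : 0 < M := Finset.card_pos.mpr hEne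
    have hLM : L ≤ M := le_trans hA0L (Finset.card_le_card hA0E)
    have hsum : L * F.card ≤ ∑ e ∈ E, (F.filter fun A => e ∈ A).card := by
      have hdc : ∑ e ∈ E, (F.filter fun A => e ∈ A).card = ∑ A ∈ F, A.card := by
        calc ∑ e ∈ E, (F.filter fun A => e ∈ A).card
            = ∑ e ∈ E, ∑ A ∈ F, (if e ∈ A then 1 else 0) := by
              refine Finset.sum_congr rfl fun e he => ?_
              rw [Finset.card_filter]
          _ = ∑ A ∈ F, ∑ e ∈ E, (if e ∈ A then 1 else 0) := Finset.sum_comm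
          _ = ∑ A ∈ F, A.card := by
              refine Finset.sum_congr rfl fun A hA => ?_
              rw [← Finset.card_filter]
              congr 1
              ext x
              simp only [Finset.mem_filter]
              exact ⟨fun h => h.2, fun h => ⟨(hF A hA).1 h, h⟩⟩
      rw [hdc, mul_comm]
      calc F.card * L = ∑ _A ∈ F, L := by rw [Finset.sum_const, smul_eq_mul]
        _ ≤ ∑ A ∈ F, A.card := Finset.sum_le_sum fun A hA => (hF A hA).2
    obtain ⟨e, heE, he⟩ : ∃ e ∈ E, L * F.card ≤ M * (F.filter fun A => e ∈ A).card := by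
      by_contra hcon
      push_neg at hcon
      have hstrict : ∑ e ∈ E, M * (F.filter fun A => e ∈ A).card < ∑ _e ∈ E, L * F.card :=
        Finset.sum_lt_sum_of_nonempty hEne fun e he => hcon e he
      rw [← Finset.mul_sum, Finset.sum_const, smul_eq_mul, ← hM] at hstrict
      have h2 : M * (L * F.card) ≤ M * ∑ e ∈ E, (F.filter fun A => e ∈ A).card :=
        Nat.mul_le_mul_left M hsum
      exact absurd h2 (Nat.not_le.mpr hstrict)
    set F1 := F.filter (fun A => e ∉ A) with hF1
    have hMF1 : M * F1.card ≤ (M - L) * F.card := by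
      have hsplit : (F.filter fun A => e ∈ A).card + F1.card = F.card := by
        rw [hF1]; exact Finset.card_filter_add_card_filter_not ..
      have h2 : M * F1.card + M * (F.filter fun A => e ∈ A).card = M * F.card := by
        rw [← Nat.mul_add, Nat.add_comm, hsplit]
      have h3 : (M - L) * F.card + L * F.card = M * F.card := by
        rw [← Nat.add_mul, Nat.sub_add_cancel hLM]
      have h1 : M * F1.card + L * F.card ≤ M * F1.card + M * (F.filter fun A => e ∈ A).card :=
        Nat.add_le_add_left he _
      omega
    obtain ⟨T1, hT1E, hT1c, hT1⟩ := ih F1 (fun A hA => hF A (Finset.filter_subset _ _ hA))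
    refine ⟨insert e T1, Finset.insert_subset heE hT1E,
      le_trans (Finset.card_insert_le _ _) (Nat.succ_le_succ hT1c), ?_⟩
    have hsub : F.filter (fun A => A ∩ insert e T1 = ∅) ⊆ F1.filter (fun A => A ∩ T1 = ∅) := by
      intro A hA
      simp only [Finset.mem_filter, hF1] at hA ⊢
      have hAe : e ∉ A := by
        intro hmem
        have : e ∈ A ∩ insert e T1 := Finset.mem_inter.mpr ⟨hmem, Finset.mem_insert_self _ _⟩
        rw [hA.2] at this
        exact absurd this (Finset.notMem_empty _)
      refine ⟨⟨hA.1, hAe⟩, ?_⟩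
      rw [Finset.eq_empty_iff_forall_notMem]
      intro x hx
      have hx' := Finset.mem_inter.mp hx
      have : x ∈ A ∩ insert e T1 :=
        Finset.mem_inter.mpr ⟨hx'.1, Finset.mem_insert_of_mem hx'.2⟩
      rw [hA.2] at this
      exact absurd this (Finset.notMem_empty _)
    calc (F.filter fun A => A ∩ insert e T1 = ∅).card * M ^ (k + 1)
        = ((F.filter fun A => A ∩ insert e T1 = ∅).card * M ^ k) * M := by ring
      _ ≤ ((F1.filter fun A => A ∩ T1 = ∅).card * M ^ k) * M :=
          Nat.mul_le_mul_right M (Nat.mul_le_mul_right _ (Finset.card_le_card hsub))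
      _ ≤ (F1.card * (M - L) ^ k) * M := Nat.mul_le_mul_right M hT1
      _ = (M * F1.card) * (M - L) ^ k := by ring
      _ ≤ ((M - L) * F.card) * (M - L) ^ k := Nat.mul_le_mul_right _ hMF1
      _ = F.card * (M - L) ^ (k + 1) := by ring

lemma mem_extNbhd {H : SimpleGraph V} {U : Finset V} {v : V} :
    v ∈ extNbhd H U ↔ v ∉ U ∧ ∃ u ∈ U, H.Adj u v := by
  rw [extNbhd, Finset.mem_filter]
  simp only [Finset.mem_univ, true_and]

lemma eIn_mono {H H' : SimpleGraph V} (h : H ≤ H') (W : Finset V) :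
    eIn H W ≤ eIn H' W := by
  classical
  apply Finset.card_le_card
  apply Finset.monotone_filter_left
  intro e he
  rw [SimpleGraph.mem_edgeFinset] at he ⊢
  exact SimpleGraph.edgeSet_mono h he

lemma edgeCount_sup_le (H H' : SimpleGraph V) :
    edgeCount (H ⊔ H') ≤ edgeCount H + edgeCount H' := by
  classical
  have h : ∀ G : SimpleGraph V, edgeCount G = G.edgeSet.ncard := by
    intro G
    rw [edgeCount, Set.ncard_eq_toFinset_card' G.edgeSet]
    congr 1
  rw [h, h, h, SimpleGraph.edgeSet_sup]
  exact Set.ncard_union_le _ _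

lemma expander_core (H : SimpleGraph V) (Dq : ℕ) (U W : Finset V) (hUW : U ⊆ W)
    (hnbr : ∀ u ∈ U, ∀ v, H.Adj u v → v ∈ W)
    (hdeg : ∀ v : V, ∃ s : Finset V, s.card = Dq ∧ ∀ u ∈ s, H.Adj v u) :
    U.card * Dq ≤ eIn H W + eIn H U := by
  classical
  have hdeg' : ∀ v : V, Dq ≤ H.degree v := by
    intro v
    obtain ⟨s, hsc, hsa⟩ := hdeg v
    rw [← hsc, ← SimpleGraph.card_neighborFinset_eq_degree]
    exact Finset.card_le_card
      (fun u hu => (SimpleGraph.mem_neighborFinset _ _ _).mpr (hsa u hu))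
  have h1 : U.card * Dq ≤ ∑ u ∈ U, H.degree u := by
    have := Finset.card_nsmul_le_sum U (fun u => H.degree u) Dq (fun u _ => hdeg' u)
    simpa [smul_eq_mul] using this
  have h2 := sum_deg_le H U W hUW hnbr
  omega

end AuxLemmas
set_option maxHeartbeats 4000000 in
/-- Lemma 3.2: every `(n₁, d, β)`-quasi-random graph with `d ≥ ln n₁` contains a
`(β n₁, f_β)`-expander spanning subgraph with at most `10⁶ β e(G₁)` edges. -/
theorem stmt4 (β : ℝ) (hβ0 : 0 < β) (hβ : β < 1 / (15 * 10 ^ 4)) :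
    ∃ n0 : ℕ, 0 < n0 ∧ ∀ n1 : ℕ, n0 ≤ n1 → ∀ d : ℝ, Real.log n1 ≤ d →
      ∀ G1 : SimpleGraph (Fin n1), QuasiRandom G1 n1 d β →
        ∃ Γ : SimpleGraph (Fin n1), Γ ≤ G1 ∧ IsExpander Γ (β * n1) (fBeta β n1) ∧
          (edgeCount Γ : ℝ) ≤ 10 ^ 6 * β * (edgeCount G1 : ℝ) := by
  classical
  have hε : 0 < 1 / 150 - 1000 * β := by
    have : 1000 * β < 1 / 150 := by linarith only [hβ]
    linarith only [this]
  have hlog : Tendsto (fun n : ℕ => Real.log n) atTop atTop :=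
    Real.tendsto_log_atTop.comp tendsto_natCast_atTop_atTop
  have hloglog : Tendsto (fun n : ℕ => Real.log (Real.log n)) atTop atTop :=
    Real.tendsto_log_atTop.comp hlog
  have hev : ∀ᶠ n : ℕ in atTop,
      16 ≤ n ∧ 1 ≤ Real.log n ∧ 2 < (n : ℝ) ^ (0.01 : ℝ) ∧
      2 ≤ Real.log n ^ (0.8 : ℝ) ∧ 1 / (500 * β) ≤ Real.log n ^ (0.07 : ℝ) ∧
      1 / (1 / 150 - 1000 * β) ≤ Real.log n ∧ 1 / β ≤ Real.log n ∧
      4 / β + 1 ≤ Real.log (Real.log n) ∧ Real.log (Real.log n) ≤ Real.log n / 150 ∧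
      300 / β ≤ (n : ℝ) := by
    have e1 : ∀ᶠ n : ℕ in atTop, 16 ≤ n := eventually_ge_atTop 16
    have e2 : ∀ᶠ n : ℕ in atTop, 1 ≤ Real.log n := hlog.eventually_ge_atTop 1
    have e3 : ∀ᶠ n : ℕ in atTop, 2 < (n : ℝ) ^ (0.01 : ℝ) :=
      ((tendsto_rpow_atTop (by norm_num : (0:ℝ) < 0.01)).comp
        tendsto_natCast_atTop_atTop).eventually_gt_atTop 2
    have e4 : ∀ᶠ n : ℕ in atTop, 2 ≤ Real.log n ^ (0.8 : ℝ) :=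
      ((tendsto_rpow_atTop (by norm_num : (0:ℝ) < 0.8)).comp hlog).eventually_ge_atTop 2
    have e5 : ∀ᶠ n : ℕ in atTop, 1 / (500 * β) ≤ Real.log n ^ (0.07 : ℝ) :=
      ((tendsto_rpow_atTop (by norm_num : (0:ℝ) < 0.07)).comp hlog).eventually_ge_atTop _
    have e6 : ∀ᶠ n : ℕ in atTop, 1 / (1 / 150 - 1000 * β) ≤ Real.log n := hlog.eventually_ge_atTop _
    have e7 : ∀ᶠ n : ℕ in atTop, 1 / β ≤ Real.log n := hlog.eventually_ge_atTop _
    have e8 : ∀ᶠ n : ℕ in atTop, 4 / β + 1 ≤ Real.log (Real.log n) :=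
      hloglog.eventually_ge_atTop _
    have e9 : ∀ᶠ n : ℕ in atTop, Real.log (Real.log n) ≤ Real.log n / 150 := by
      have hlo : ∀ᶠ x : ℝ in atTop, ‖Real.log x‖ ≤ 1 / 150 * ‖x‖ :=
        Real.isLittleO_log_id_atTop.def (by norm_num)
      filter_upwards [hlog.eventually hlo, e2] with n h1 h2
      have : |Real.log (Real.log n)| ≤ 1 / 150 * |Real.log n| := by
        simpa [Real.norm_eq_abs] using h1
      have h3 : |Real.log n| = Real.log n := abs_of_nonneg (by linarith)
      calc Real.log (Real.log n) ≤ |Real.log (Real.log n)| := le_abs_self _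
        _ ≤ 1 / 150 * Real.log n := by rw [h3] at this; exact this
        _ = Real.log n / 150 := by ring
    have e10 : ∀ᶠ n : ℕ in atTop, 300 / β ≤ (n : ℝ) :=
      tendsto_natCast_atTop_atTop.eventually_ge_atTop _
    filter_upwards [e1, e2, e3, e4, e5, e6, e7, e8, e9, e10] with n h1 h2 h3 h4 h5 h6 h7 h8 h9 h10
    exact ⟨h1, h2, h3, h4, h5, h6, h7, h8, h9, h10⟩
  obtain ⟨n0, hn0⟩ := eventually_atTop.mp hev
  refine ⟨max n0 16, lt_of_lt_of_le (by norm_num) (le_max_right _ _), ?_⟩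
  intro n1 hn1 d hd G1 hQR
  obtain ⟨h16, hx1, hc3, hc4, hc5, hc6, hc7, hc8, hc9, hc10⟩ :=
    hn0 n1 (le_trans (le_max_left _ _) hn1)
  clear hev hn0 hlog hloglog hn1
  -- basic facts
  set x := Real.log n1 with hxdef
  have hx0 : 0 < x := lt_of_lt_of_le one_pos hx1
  have hd1 : 1 ≤ d := le_trans hx1 hd
  have hd0 : 0 < d := lt_of_lt_of_le one_pos hd1
  have hn1pos : 0 < n1 := lt_of_lt_of_le (by norm_num) h16
  have hn1R : (0 : ℝ) < n1 := by exact_mod_cast hn1pos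
  obtain ⟨P0, P1, P2, P3⟩ := hQR
  -- the degree quota
  set D := ⌈1000 * β * d⌉₊ with hDdef
  have hDge : 1000 * β * d ≤ (D : ℝ) := Nat.le_ceil _
  have hDub : (D : ℝ) ≤ 1000 * β * d + 1 :=
    (Nat.ceil_lt_add_one (by positivity)).le
  have hβd1 : 1 ≤ β * d := by
    have : 1 / β ≤ d := le_trans hc7 hd
    rw [div_le_iff₀ hβ0] at this
    linarith only [this]
  have hD150 : (D : ℝ) ≤ d / 150 := by
    have h1 : 1 / (1 / 150 - 1000 * β) ≤ d := le_trans hc6 hd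
    rw [div_le_iff₀ hε] at h1
    linarith only [hDub, h1]
  have hDdeg : ∀ v : Fin n1, D ≤ G1.degree v := by
    intro v
    have := P0 v
    exact_mod_cast le_trans hD150 this
  -- choose D edges at every vertex
  have hSex : ∀ v : Fin n1, ∃ s ⊆ G1.neighborFinset v, s.card = D := by
    intro v
    exact Finset.exists_subset_card_eq (by rw [SimpleGraph.card_neighborFinset_eq_degree]; exact hDdeg v)
  choose S hSsub hScard using hSex
  set Γ1 := SimpleGraph.fromRel (fun a b => b ∈ S a) with hΓ1def
  have hΓ1le : Γ1 ≤ G1 := by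
    intro a b hab
    rw [hΓ1def, SimpleGraph.fromRel_adj] at hab
    rcases hab.2 with h | h
    · exact (SimpleGraph.mem_neighborFinset _ _ _).mp (hSsub a h)
    · exact ((SimpleGraph.mem_neighborFinset _ _ _).mp (hSsub b h)).symm
  have hΓ1deg : ∀ v : Fin n1, D ≤ Γ1.degree v := by
    intro v
    rw [← hScard v, ← SimpleGraph.card_neighborFinset_eq_degree]
    apply Finset.card_le_card
    intro u hu
    rw [SimpleGraph.mem_neighborFinset, hΓ1def, SimpleGraph.fromRel_adj]
    exact ⟨((SimpleGraph.mem_neighborFinset _ _ _).mp (hSsub v hu)).ne, Or.inl hu⟩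
  have hΓ1card : edgeCount Γ1 ≤ n1 * D := by
    have h := card_edge_le_of_pairs Γ1
      (Finset.univ.biUnion fun v => (S v).image fun u => (v, u)) ?_
    · refine le_trans h (le_trans (Finset.card_biUnion_le) ?_)
      calc ∑ v : Fin n1, ((S v).image fun u => (v, u)).card
          ≤ ∑ v : Fin n1, D := Finset.sum_le_sum fun v _ =>
            le_trans (Finset.card_image_le) (le_of_eq (hScard v))
        _ = n1 * D := by rw [Finset.sum_const, smul_eq_mul, Finset.card_univ, Fintype.card_fin]
    · intro a b hab
      rw [hΓ1def, SimpleGraph.fromRel_adj] at hab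
      rcases hab.2 with h | h
      · exact Or.inl (Finset.mem_biUnion.mpr ⟨a, Finset.mem_univ a,
          Finset.mem_image.mpr ⟨b, h, rfl⟩⟩)
      · exact Or.inr (Finset.mem_biUnion.mpr ⟨b, Finset.mem_univ b,
          Finset.mem_image.mpr ⟨a, h, rfl⟩⟩)
  -- ordered adjacent pairs of G1
  set E : Finset (Fin n1 × Fin n1) :=
    (Finset.univ ×ˢ Finset.univ).filter (fun p => G1.Adj p.1 p.2) with hEdef
  set M := E.card with hMdef
  have hME : M = ∑ v : Fin n1, G1.degree v := pairCount_eq_sum_degrees G1 Finset.univ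
  have hM2e : M = 2 * edgeCount G1 := by
    rw [hME, SimpleGraph.sum_degrees_eq_twice_card_edges]; rfl
  have hMlow : (n1 : ℝ) * d / 150 ≤ (M : ℝ) := by
    rw [hME]
    push_cast
    calc (n1 : ℝ) * d / 150 = (Finset.univ : Finset (Fin n1)).card • (d / 150) := by
          rw [Finset.card_univ, Fintype.card_fin, nsmul_eq_mul]; ring
      _ ≤ ∑ v : Fin n1, (G1.degree v : ℝ) :=
          Finset.card_nsmul_le_sum _ _ _ (fun v _ => P0 v)
  have hMposR : (0 : ℝ) < M := by
    have := mul_pos hn1R hd0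
    apply lt_of_lt_of_le _ hMlow
    linarith
  have hMpos : 0 < M := by exact_mod_cast hMposR
  -- sizes
  set m := ⌊β * (n1 : ℝ)⌋₊ with hmdef
  set z := ⌊(1 / 3 - 27 * β) * (n1 : ℝ)⌋₊ with hzdef
  -- the quota for pair sets
  set y' := ⌊Real.log x⌋₊ with hy'def
  have hy4β : 4 / β ≤ (y' : ℝ) := by
    have h1 : Real.log x - 1 < y' := by
      have := Nat.lt_floor_add_one (Real.log x)
      linarith [this]
    linarith [hc8]
  have h4βpos : (0 : ℝ) < 4 / β := div_pos (by norm_num) hβ0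
  have hlogx0 : (0 : ℝ) ≤ Real.log x := by linarith [hc8, h4βpos]
  have hy'posR : (0 : ℝ) < y' := lt_of_lt_of_le h4βpos hy4β
  have hy'pos : 0 < y' := by exact_mod_cast hy'posR
  set L := n1 * y' with hLdef
  have hLpos : 0 < L := Nat.mul_pos hn1pos hy'pos
  have hLcast : (L : ℝ) = (n1 : ℝ) * (y' : ℝ) := by rw [hLdef]; push_cast; ring
  have hLM : L ≤ M := by
    have : (L : ℝ) ≤ (M : ℝ) := by
      rw [hLcast]
      calc (n1 : ℝ) * y' ≤ n1 * Real.log x := by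
            apply mul_le_mul_of_nonneg_left (Nat.floor_le hlogx0) (le_of_lt hn1R)
        _ ≤ n1 * (x / 150) := mul_le_mul_of_nonneg_left hc9 (le_of_lt hn1R)
        _ ≤ n1 * (d / 150) := by
            apply mul_le_mul_of_nonneg_left _ (le_of_lt hn1R)
            linarith
        _ = n1 * d / 150 := by ring
        _ ≤ M := hMlow
    exact_mod_cast this
  -- the family of pair sets
  set F : Finset (Finset (Fin n1 × Fin n1)) :=
    (((Finset.univ.powersetCard m) ×ˢ (Finset.univ.powersetCard z)).filter
      (fun q => Disjoint q.1 q.2)).image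
      (fun q => ((q.1 ×ˢ q.2).filter fun p => G1.Adj p.1 p.2)) with hFdef
  have hFmem : ∀ A ∈ F, A ⊆ E ∧ L ≤ A.card := by
    intro A hA
    rw [hFdef, Finset.mem_image] at hA
    obtain ⟨q, hq, rfl⟩ := hA
    rw [Finset.mem_filter, Finset.mem_product, Finset.mem_powersetCard_univ,
      Finset.mem_powersetCard_univ] at hq
    obtain ⟨⟨hq1, hq2⟩, hqd⟩ := hq
    constructor
    · intro p hp
      rw [Finset.mem_filter] at hp ⊢
      exact ⟨Finset.mem_product.mpr ⟨Finset.mem_univ _, Finset.mem_univ _⟩, hp.2⟩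
    · have hP3 := P3 q.1 q.2 hqd hq1 hq2
      have : (L : ℝ) ≤ (((q.1 ×ˢ q.2).filter fun p => G1.Adj p.1 p.2).card : ℝ) := by
        calc (L : ℝ) = (n1 : ℝ) * y' := hLcast
          _ ≤ (n1 : ℝ) * Real.log x :=
              mul_le_mul_of_nonneg_left (Nat.floor_le hlogx0) (le_of_lt hn1R)
          _ ≤ _ := hP3
      exact_mod_cast this
  have hFcard : F.card ≤ 4 ^ n1 := by
    calc F.card ≤ (((Finset.univ.powersetCard m) ×ˢ (Finset.univ.powersetCard z)).filter
        (fun q => Disjoint q.1 q.2)).card := Finset.card_image_le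
      _ ≤ ((Finset.univ.powersetCard m) ×ˢ (Finset.univ.powersetCard z)).card :=
          Finset.card_le_card (Finset.filter_subset _ _)
      _ = (Finset.univ.powersetCard m).card * (Finset.univ.powersetCard z).card :=
          Finset.card_product _ _
      _ ≤ 2 ^ n1 * 2 ^ n1 := by
          apply Nat.mul_le_mul
          all_goals
            calc (Finset.univ.powersetCard _).card
                ≤ (Finset.univ : Finset (Fin n1)).powerset.card := Finset.card_le_card
                  (fun s hs => Finset.mem_powerset.mpr (Finset.subset_univ s))
              _ = 2 ^ n1 := by rw [Finset.card_powerset, Finset.card_univ, Fintype.card_fin]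
      _ = 4 ^ n1 := by rw [← Nat.mul_pow]
  -- hitting set
  set k := 2 * n1 * M / L + 1 with hkdef
  obtain ⟨T, hTE, hTk, hTbound⟩ := hitting E L hLpos k F hFmem
  have hkL : 2 * n1 * M < k * L := by
    have h1 := Nat.div_add_mod (2 * n1 * M) L
    have h2 := Nat.mod_lt (2 * n1 * M) hLpos
    have h3 : k * L = L * (2 * n1 * M / L) + L := by rw [hkdef]; ring
    omega
  have hunhit : (F.filter fun A => A ∩ T = ∅).card = 0 := by
    by_contra hne0
    have h1 : 1 ≤ (F.filter fun A => A ∩ T = ∅).card := Nat.one_le_iff_ne_zero.mpr hne0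
    -- real comparison
    have hsubC : ((M - L : ℕ) : ℝ) = (M : ℝ) - L := by
      rw [Nat.cast_sub hLM]
    have hexp : ((M : ℝ) - L) ≤ M * Real.exp (-(L / M)) := by
      have h2 := Real.add_one_le_exp (-(L / M : ℝ))
      have h3 : (-(L / M : ℝ) + 1) * M ≤ Real.exp (-(L / M)) * M :=
        mul_le_mul_of_nonneg_right h2 (le_of_lt hMposR)
      calc (M : ℝ) - L = (-(L / M : ℝ) + 1) * M := by field_simp; ring
        _ ≤ Real.exp (-(L / M)) * M := h3
        _ = M * Real.exp (-(L / M)) := mul_comm _ _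
    have h42 : (4 : ℝ) ≤ Real.exp 2 := by
      have h5 : Real.exp 2 = Real.exp 1 ^ 2 := by
        rw [← Real.exp_nat_mul]; norm_num
      have h8 : (2.7182818283 : ℝ) ^ 2 ≤ Real.exp 1 ^ 2 :=
        pow_le_pow_left₀ (by norm_num) Real.exp_one_gt_d9.le 2
      have h9 : (4 : ℝ) ≤ (2.7182818283 : ℝ) ^ 2 := by norm_num
      rw [h5]
      linarith only [h8, h9]
    have hML0 : (0 : ℝ) ≤ (M : ℝ) - L := by
      rw [← hsubC]; positivity
    have hchain : ((F.filter fun A => A ∩ T = ∅).card : ℝ) * (M : ℝ) ^ k < (M : ℝ) ^ k := by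
      have hb : ((F.filter fun A => A ∩ T = ∅).card : ℝ) * (M : ℝ) ^ k
          ≤ (F.card : ℝ) * ((M : ℝ) - L) ^ k := by
        have := hTbound
        have hcast : ((F.filter fun A => A ∩ T = ∅).card * M ^ k : ℕ) ≤
            (F.card * (M - L) ^ k : ℕ) := this
        calc ((F.filter fun A => A ∩ T = ∅).card : ℝ) * (M : ℝ) ^ k
            = (((F.filter fun A => A ∩ T = ∅).card * M ^ k : ℕ) : ℝ) := by push_cast; ring
          _ ≤ ((F.card * (M - L) ^ k : ℕ) : ℝ) := by exact_mod_cast hcast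
          _ = (F.card : ℝ) * ((M : ℝ) - L) ^ k := by push_cast [hsubC]; ring
      have hc : (F.card : ℝ) * ((M : ℝ) - L) ^ k ≤
          (4 : ℝ) ^ n1 * ((M : ℝ) - L) ^ k := by
        apply mul_le_mul_of_nonneg_right _ (pow_nonneg hML0 k)
        exact_mod_cast hFcard
      have hd' : (4 : ℝ) ^ n1 * ((M : ℝ) - L) ^ k ≤
          Real.exp (2 * n1) * ((M : ℝ) ^ k * Real.exp (-(k * (L / M)))) := by
        have h6 : ((M : ℝ) - L) ^ k ≤ (M * Real.exp (-(L / M))) ^ k :=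
          pow_le_pow_left₀ hML0 hexp k
        have h7 : (M * Real.exp (-(L / M)) : ℝ) ^ k
            = (M : ℝ) ^ k * Real.exp (-(L / M)) ^ k := mul_pow _ _ _
        have h8 : Real.exp (-(L / M) : ℝ) ^ k = Real.exp (-(k * (L / M))) := by
          rw [← Real.exp_nat_mul]; ring_nf
        have h9 : (4 : ℝ) ^ n1 ≤ Real.exp 2 ^ n1 := pow_le_pow_left₀ (by norm_num) h42 n1
        have h10 : Real.exp 2 ^ n1 = Real.exp (2 * n1) := by
          rw [← Real.exp_nat_mul]; ring_nf
        calc (4 : ℝ) ^ n1 * ((M : ℝ) - L) ^ k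
            ≤ Real.exp 2 ^ n1 * ((M : ℝ) - L) ^ k :=
              mul_le_mul_of_nonneg_right h9 (pow_nonneg hML0 k)
          _ ≤ Real.exp 2 ^ n1 * ((M * Real.exp (-(L / M))) ^ k) := by
              apply mul_le_mul_of_nonneg_left h6 (by positivity)
          _ = Real.exp (2 * n1) * ((M : ℝ) ^ k * Real.exp (-(k * (L / M)))) := by
              rw [h7, h8, h10]
      have hexplt : Real.exp (2 * n1) * Real.exp (-(k * (L / M))) < 1 := by
        rw [← Real.exp_add]
        rw [← Real.exp_zero]
        apply Real.exp_lt_exp.mpr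
        have h11 : (2 * n1 * M : ℝ) < k * L := by exact_mod_cast hkL
        have h12 : (2 * n1 : ℝ) < k * L / M := by
          rw [lt_div_iff₀ hMposR]
          linarith
        have : (k : ℝ) * (L / M) = k * L / M := by ring
        linarith [h12, this.le]
      calc ((F.filter fun A => A ∩ T = ∅).card : ℝ) * (M : ℝ) ^ k
          ≤ (4 : ℝ) ^ n1 * ((M : ℝ) - L) ^ k := le_trans hb hc
        _ ≤ Real.exp (2 * n1) * ((M : ℝ) ^ k * Real.exp (-(k * (L / M)))) := hd'
        _ = (Real.exp (2 * n1) * Real.exp (-(k * (L / M)))) * (M : ℝ) ^ k := by ring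
        _ < 1 * (M : ℝ) ^ k := by
            apply mul_lt_mul_of_pos_right hexplt (by positivity)
        _ = (M : ℝ) ^ k := one_mul _
    have : ((F.filter fun A => A ∩ T = ∅).card : ℝ) < 1 :=
      lt_of_mul_lt_mul_right (by linarith [hchain]) (by positivity)
    have : (F.filter fun A => A ∩ T = ∅).card < 1 := by exact_mod_cast this
    omega
  have hhit : ∀ U Z : Finset (Fin n1), Disjoint U Z → U.card = m → Z.card = z →
      ∃ p : Fin n1 × Fin n1, p ∈ T ∧ p.1 ∈ U ∧ p.2 ∈ Z ∧ G1.Adj p.1 p.2 := by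
    intro U Z hUZ hU hZ
    have hAF : ((U ×ˢ Z).filter fun p => G1.Adj p.1 p.2) ∈ F := by
      rw [hFdef, Finset.mem_image]
      refine ⟨(U, Z), ?_, rfl⟩
      rw [Finset.mem_filter, Finset.mem_product, Finset.mem_powersetCard_univ,
        Finset.mem_powersetCard_univ]
      exact ⟨⟨hU, hZ⟩, hUZ⟩
    have hAT : ((U ×ˢ Z).filter fun p => G1.Adj p.1 p.2) ∩ T ≠ ∅ := by
      intro hemp
      have : ((U ×ˢ Z).filter fun p => G1.Adj p.1 p.2) ∈ F.filter fun A => A ∩ T = ∅ :=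
        Finset.mem_filter.mpr ⟨hAF, hemp⟩
      rw [Finset.card_eq_zero.mp hunhit] at this
      exact absurd this (Finset.notMem_empty _)
    obtain ⟨p, hp⟩ := Finset.nonempty_iff_ne_empty.mpr hAT
    rw [Finset.mem_inter, Finset.mem_filter, Finset.mem_product] at hp
    exact ⟨p, hp.2, hp.1.1.1, hp.1.1.2, hp.1.2⟩
  clear_value E M y' L F k
  -- second graph from the hitting set
  set Γ2 := SimpleGraph.fromRel (fun a b => (a, b) ∈ T) with hΓ2def
  have hΓ2le : Γ2 ≤ G1 := by
    intro a b hab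
    rw [hΓ2def, SimpleGraph.fromRel_adj] at hab
    rcases hab.2 with h | h
    · have h' := hTE h; rw [hEdef, Finset.mem_filter] at h'; exact h'.2
    · have h' := hTE h; rw [hEdef, Finset.mem_filter] at h'; exact h'.2.symm
  have hΓ2card : edgeCount Γ2 ≤ T.card := by
    apply card_edge_le_of_pairs Γ2 T
    intro a b hab
    rw [hΓ2def, SimpleGraph.fromRel_adj] at hab
    exact hab.2
  set Γ := Γ1 ⊔ Γ2 with hΓdef
  have hΓle : Γ ≤ G1 := sup_le hΓ1le hΓ2le
  have hSadj : ∀ v : Fin n1, ∃ s : Finset (Fin n1), s.card = D ∧ ∀ u ∈ s, Γ.Adj v u := by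
    intro v
    refine ⟨S v, hScard v, fun u hu => ?_⟩
    rw [hΓdef, SimpleGraph.sup_adj]
    left
    rw [hΓ1def, SimpleGraph.fromRel_adj]
    exact ⟨((SimpleGraph.mem_neighborFinset _ _ _).mp (hSsub v hu)).ne, Or.inl hu⟩
  have hcore : ∀ U : Finset (Fin n1),
      (U.card : ℝ) * D ≤ (eIn G1 (U ∪ extNbhd Γ U) : ℝ) + (eIn G1 U : ℝ) := by
    intro U
    have hWnbr : ∀ u ∈ U, ∀ v, Γ.Adj u v → v ∈ U ∪ extNbhd Γ U := by
      intro u hu v hadj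
      by_cases hvU : v ∈ U
      · exact Finset.mem_union_left _ hvU
      · exact Finset.mem_union_right _ (mem_extNbhd.mpr ⟨hvU, u, hu, hadj⟩)
    have h2 := expander_core Γ D U (U ∪ extNbhd Γ U) Finset.subset_union_left hWnbr hSadj
    have h3 := eIn_mono hΓle (U ∪ extNbhd Γ U)
    have h4 := eIn_mono hΓle U
    have h5 : U.card * D ≤ eIn G1 (U ∪ extNbhd Γ U) + eIn G1 U := by omega
    exact_mod_cast h5
  refine ⟨Γ, hΓle, ?_, ?_⟩
  · -- the expander property
    intro U hUne hUcard
    have hU0 : (0 : ℝ) < U.card := by exact_mod_cast Finset.card_pos.mpr hUne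
    have hWcard : (((U ∪ extNbhd Γ U)).card : ℝ) ≤ U.card + (extNbhd Γ U).card := by
      exact_mod_cast Finset.card_union_le U (extNbhd Γ U)
    simp only [fBeta]
    by_cases hUm : U.card = ⌊β * (n1 : ℝ)⌋₊
    · -- the largest size: use the hitting set
      rw [if_pos hUm]
      by_contra hcon
      rw [not_le] at hcon
      have hcpos : (0 : ℝ) < 2 * (1 + 39 * β) / (3 * β) :=
        div_pos (by linarith only [hβ0]) (by linarith only [hβ0])
      have hdisjUN : Disjoint U (extNbhd Γ U) := by
        rw [Finset.disjoint_left]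
        intro a haU haN
        exact (mem_extNbhd.mp haN).1 haU
      have hcardUN : (U ∪ extNbhd Γ U).card = U.card + (extNbhd Γ U).card :=
        Finset.card_union_of_disjoint hdisjUN
      have hUNle : U.card + (extNbhd Γ U).card ≤ n1 := by
        rw [← hcardUN]
        calc (U ∪ extNbhd Γ U).card ≤ (Finset.univ : Finset (Fin n1)).card :=
              Finset.card_le_card (Finset.subset_univ _)
          _ = n1 := by rw [Finset.card_univ, Fintype.card_fin]
      have hRR : (((Finset.univ \ (U ∪ extNbhd Γ U)) : Finset (Fin n1)).card : ℝ)
          = n1 - U.card - (extNbhd Γ U).card := by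
        rw [Finset.card_sdiff_of_subset (Finset.subset_univ _), Finset.card_univ, Fintype.card_fin,
          hcardUN]
        push_cast [hUNle]
        ring
      have hUβ : (U.card : ℝ) ≤ β * n1 := hUcard
      have h27 : (0 : ℝ) ≤ 1 / 3 - 27 * β := by linarith only [hβ]
      have hzle : (z : ℝ) ≤ (1 / 3 - 27 * β) * n1 := by
        rw [hzdef]
        exact Nat.floor_le (mul_nonneg h27 hn1R.le)
      have hcm : 2 * (1 + 39 * β) / (3 * β) * (β * (n1 : ℝ)) = (2 / 3 + 26 * β) * n1 := by
        field_simp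
        ring
      have hzR : z < (Finset.univ \ (U ∪ extNbhd Γ U)).card := by
        have hstep : (z : ℝ) < ((Finset.univ \ (U ∪ extNbhd Γ U)).card : ℝ) := by
          rw [hRR]
          have h1 : (extNbhd Γ U).card < 2 * (1 + 39 * β) / (3 * β) * U.card := hcon
          have h2 : 2 * (1 + 39 * β) / (3 * β) * (U.card : ℝ)
              ≤ 2 * (1 + 39 * β) / (3 * β) * (β * n1) :=
            mul_le_mul_of_nonneg_left hUβ hcpos.le
          rw [hcm] at h2
          linarith only [hzle, h1, h2, hUβ]
        exact_mod_cast hstep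
      obtain ⟨Z, hZR, hZcard⟩ := Finset.exists_subset_card_eq (le_of_lt hzR)
      have hdisjUZ : Disjoint U Z := by
        rw [Finset.disjoint_left]
        intro a haU haZ
        have h' := hZR haZ
        rw [Finset.mem_sdiff] at h'
        exact h'.2 (Finset.mem_union_left _ haU)
      obtain ⟨p, hpT, hp1, hp2, hpadj⟩ := hhit U Z hdisjUZ (by rw [hmdef]; exact hUm)
        (by rw [hzdef] at hZcard ⊢; exact hZcard)
      have hΓadj : Γ.Adj p.1 p.2 := by
        rw [hΓdef, SimpleGraph.sup_adj]
        right
        rw [hΓ2def, SimpleGraph.fromRel_adj]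
        exact ⟨hpadj.ne, Or.inl hpT⟩
      have hp2N : p.2 ∈ extNbhd Γ U := by
        refine mem_extNbhd.mpr ⟨?_, p.1, hp1, hΓadj⟩
        intro hp2U
        exact (Finset.disjoint_left.mp hdisjUZ hp2U) hp2
      have h' := hZR hp2
      rw [Finset.mem_sdiff] at h'
      exact h'.2 (Finset.mem_union_right _ hp2N)
    · rw [if_neg hUm]
      by_cases hUsmall : (U.card : ℝ) < (n1 : ℝ) ^ (0.1 : ℝ)
      · -- small sets
        rw [if_pos hUsmall]
        by_contra hcon
        rw [not_le] at hcon
        have hx08 : (0 : ℝ) < x ^ (0.8 : ℝ) := Real.rpow_pos_of_pos hx0 _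
        have hn1le : (1 : ℝ) ≤ (n1 : ℝ) := by
          have : (1 : ℕ) ≤ n1 := le_trans (by norm_num) h16
          exact_mod_cast this
        have hUlt : (U.card : ℝ) < (n1 : ℝ) ^ (0.11 : ℝ) * Real.log n1 := by
          have h1 : (n1 : ℝ) ^ (0.1 : ℝ) ≤ (n1 : ℝ) ^ (0.11 : ℝ) :=
            Real.rpow_le_rpow_of_exponent_le hn1le (by norm_num)
          have h2 : (n1 : ℝ) ^ (0.11 : ℝ) ≤ (n1 : ℝ) ^ (0.11 : ℝ) * Real.log n1 :=
            le_mul_of_one_le_right (by positivity) hx1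
          calc (U.card : ℝ) < (n1 : ℝ) ^ (0.1 : ℝ) := hUsmall
            _ ≤ (n1 : ℝ) ^ (0.11 : ℝ) := h1
            _ ≤ _ := h2
        have hx08x : x ^ (0.8 : ℝ) ≤ x := by
          calc x ^ (0.8 : ℝ) ≤ x ^ (1 : ℝ) :=
                Real.rpow_le_rpow_of_exponent_le hx1 (by norm_num)
            _ = x := Real.rpow_one x
        have hmul : (n1 : ℝ) ^ (0.01 : ℝ) * (n1 : ℝ) ^ (0.1 : ℝ) = (n1 : ℝ) ^ (0.11 : ℝ) := by
          rw [← Real.rpow_add hn1R]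
          norm_num
        have hWlt : (((U ∪ extNbhd Γ U)).card : ℝ) < (n1 : ℝ) ^ (0.11 : ℝ) * Real.log n1 := by
          have hn01 : (0 : ℝ) < (n1 : ℝ) ^ (0.1 : ℝ) := Real.rpow_pos_of_pos hn1R _
          calc (((U ∪ extNbhd Γ U)).card : ℝ) ≤ U.card + (extNbhd Γ U).card := hWcard
            _ < (U.card : ℝ) + x ^ (0.8 : ℝ) * U.card := by linarith
            _ = (1 + x ^ (0.8 : ℝ)) * U.card := by ring
            _ ≤ (1 + x ^ (0.8 : ℝ)) * (n1 : ℝ) ^ (0.1 : ℝ) := by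
                apply mul_le_mul_of_nonneg_left hUsmall.le (by positivity)
            _ ≤ (2 * x) * (n1 : ℝ) ^ (0.1 : ℝ) := by
                apply mul_le_mul_of_nonneg_right _ hn01.le
                linarith
            _ < ((n1 : ℝ) ^ (0.01 : ℝ) * x) * (n1 : ℝ) ^ (0.1 : ℝ) := by
                apply mul_lt_mul_of_pos_right _ hn01
                exact mul_lt_mul_of_pos_right hc3 hx0
            _ = ((n1 : ℝ) ^ (0.01 : ℝ) * (n1 : ℝ) ^ (0.1 : ℝ)) * x := by ring
            _ = (n1 : ℝ) ^ (0.11 : ℝ) * Real.log n1 := by rw [hmul]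
        have hP1U := P1 U hUlt
        have hP1W := P1 (U ∪ extNbhd Γ U) hWlt
        have hUWsum : (((U ∪ extNbhd Γ U)).card : ℝ) + U.card
            < (2 + x ^ (0.8 : ℝ)) * U.card := by
          have h9 : ((extNbhd Γ U).card : ℝ) < x ^ (0.8 : ℝ) * U.card := hcon
          have h10 : (2 + x ^ (0.8 : ℝ)) * U.card
              = 2 * U.card + x ^ (0.8 : ℝ) * U.card := by ring
          linarith [hWcard]
        have hd13pos : (0 : ℝ) < d ^ (0.13 : ℝ) := Real.rpow_pos_of_pos hd0 _
        have hkey : d ^ (0.13 : ℝ) * (2 + x ^ (0.8 : ℝ)) ≤ 1000 * β * d := by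
          have h2x : 2 + x ^ (0.8 : ℝ) ≤ 2 * x ^ (0.8 : ℝ) := by linarith [hc4]
          have hx87 : x ^ (0.87 : ℝ) ≤ d ^ (0.87 : ℝ) :=
            Real.rpow_le_rpow hx0.le hd (by norm_num)
          have hsplit : x ^ (0.87 : ℝ) = x ^ (0.8 : ℝ) * x ^ (0.07 : ℝ) := by
            rw [← Real.rpow_add hx0]
            norm_num
          have h2b : 2 * x ^ (0.8 : ℝ) ≤ 1000 * β * x ^ (0.87 : ℝ) := by
            rw [hsplit]
            have h500 : (0 : ℝ) < 500 * β := by linarith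
            rw [div_le_iff₀ h500] at hc5
            have h6 : x ^ (0.8 : ℝ) * 1 ≤ x ^ (0.8 : ℝ) * (x ^ (0.07 : ℝ) * (500 * β)) :=
              mul_le_mul_of_nonneg_left hc5 hx08.le
            have h7 : x ^ (0.8 : ℝ) * (x ^ (0.07 : ℝ) * (500 * β))
                = 500 * β * (x ^ (0.8 : ℝ) * x ^ (0.07 : ℝ)) := by ring
            have h8 : 1000 * β * (x ^ (0.8 : ℝ) * x ^ (0.07 : ℝ))
                = 2 * (500 * β * (x ^ (0.8 : ℝ) * x ^ (0.07 : ℝ))) := by ring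
            linarith
          have hdd : d ^ (0.13 : ℝ) * d ^ (0.87 : ℝ) = d := by
            rw [← Real.rpow_add hd0]
            norm_num
          calc d ^ (0.13 : ℝ) * (2 + x ^ (0.8 : ℝ))
              ≤ d ^ (0.13 : ℝ) * (1000 * β * x ^ (0.87 : ℝ)) :=
                mul_le_mul_of_nonneg_left (le_trans h2x h2b) hd13pos.le
            _ ≤ d ^ (0.13 : ℝ) * (1000 * β * d ^ (0.87 : ℝ)) := by
                apply mul_le_mul_of_nonneg_left _ hd13pos.le
                exact mul_le_mul_of_nonneg_left hx87 (by linarith)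
            _ = 1000 * β * (d ^ (0.13 : ℝ) * d ^ (0.87 : ℝ)) := by ring
            _ = 1000 * β * d := by rw [hdd]
        have hlast : (U.card : ℝ) * D < (U.card : ℝ) * D := by
          calc (U.card : ℝ) * D
              ≤ (eIn G1 (U ∪ extNbhd Γ U) : ℝ) + (eIn G1 U : ℝ) := hcore U
            _ ≤ d ^ (0.13 : ℝ) * ((U ∪ extNbhd Γ U)).card + d ^ (0.13 : ℝ) * U.card :=
                add_le_add hP1W hP1U
            _ = d ^ (0.13 : ℝ) * ((((U ∪ extNbhd Γ U)).card : ℝ) + U.card) := by ring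
            _ < d ^ (0.13 : ℝ) * ((2 + x ^ (0.8 : ℝ)) * U.card) :=
                mul_lt_mul_of_pos_left hUWsum hd13pos
            _ = (d ^ (0.13 : ℝ) * (2 + x ^ (0.8 : ℝ))) * U.card := by ring
            _ ≤ (1000 * β * d) * U.card := mul_le_mul_of_nonneg_right hkey hU0.le
            _ ≤ (D : ℝ) * U.card := mul_le_mul_of_nonneg_right hDge hU0.le
            _ = (U.card : ℝ) * D := by ring
        exact absurd hlast (lt_irrefl _)
      · -- middle sets
        rw [if_neg hUsmall]
        by_contra hcon
        rw [not_le] at hcon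
        have hUβ : (U.card : ℝ) ≤ β * n1 := hUcard
        have hβn1 : (0 : ℝ) < β * n1 := mul_pos hβ0 hn1R
        have hWlt : (((U ∪ extNbhd Γ U)).card : ℝ) < 12 * U.card := by
          linarith [hWcard]
        have hP2W := P2 (U ∪ extNbhd Γ U) (by
          have h9 : 12 * (U.card : ℝ) ≤ 12 * (β * n1) := by linarith
          have h10 : 12 * (β * (n1 : ℝ)) = 12 * β * n1 := by ring
          linarith)
        have hP2U := P2 U (by
          have h10 : 12 * (β * (n1 : ℝ)) = 12 * β * n1 := by ring
          linarith)
        have hβdpos : (0 : ℝ) < β * d := lt_of_lt_of_le one_pos hβd1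
        have h50 : (0 : ℝ) < 50 * β * d := by
          have : 50 * β * d = 50 * (β * d) := by ring
          linarith
        have hlast : (U.card : ℝ) * D < (U.card : ℝ) * D := by
          calc (U.card : ℝ) * D
              ≤ (eIn G1 (U ∪ extNbhd Γ U) : ℝ) + (eIn G1 U : ℝ) := hcore U
            _ ≤ 50 * β * d * ((U ∪ extNbhd Γ U)).card + 50 * β * d * U.card :=
                add_le_add hP2W hP2U
            _ < 50 * β * d * (12 * U.card) + 50 * β * d * U.card := by
                have := mul_lt_mul_of_pos_left hWlt h50
                linarith
            _ = 650 * (β * d) * U.card := by ring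
            _ < 1000 * β * d * U.card := by
                have h7 : (0 : ℝ) < β * d * U.card := mul_pos hβdpos hU0
                have h8 : 1000 * β * d * (U.card : ℝ) = 1000 * (β * d * U.card) := by ring
                have h9 : 650 * (β * d) * (U.card : ℝ) = 650 * (β * d * U.card) := by ring
                linarith
            _ ≤ (D : ℝ) * U.card := mul_le_mul_of_nonneg_right hDge hU0.le
            _ = (U.card : ℝ) * D := by ring
        exact absurd hlast (lt_irrefl _)
  · -- the edge bound
    have hEdge : edgeCount Γ ≤ n1 * D + T.card := by
      calc edgeCount Γ ≤ edgeCount Γ1 + edgeCount Γ2 := by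
            rw [hΓdef]; exact edgeCount_sup_le Γ1 Γ2
        _ ≤ n1 * D + T.card := Nat.add_le_add hΓ1card hΓ2card
    have he2 : (M : ℝ) = 2 * (edgeCount G1 : ℝ) := by
      rw [hM2e]
      push_cast
      ring
    have hnd300 : (n1 : ℝ) * d ≤ 300 * (edgeCount G1 : ℝ) := by linarith [hMlow, he2]
    have he1 : 1 ≤ β * (edgeCount G1 : ℝ) := by
      have h1 : (n1 : ℝ) ≤ n1 * d := le_mul_of_one_le_right hn1R.le hd1
      have h2 : 300 / β ≤ (n1 : ℝ) := hc10
      rw [div_le_iff₀ hβ0] at h2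
      have h3 : (n1 : ℝ) ≤ 300 * (edgeCount G1 : ℝ) := le_trans h1 hnd300
      have h4 : β * (n1 : ℝ) ≤ β * (300 * (edgeCount G1 : ℝ)) :=
        mul_le_mul_of_nonneg_left h3 hβ0.le
      linarith only [h2, h4]
    have hkR : (T.card : ℝ) ≤ 2 * (β * (edgeCount G1 : ℝ)) := by
      have h1 : (T.card : ℝ) ≤ k := by exact_mod_cast hTk
      have h2 : (k : ℝ) ≤ (2 * (n1 : ℝ) * M) / L + 1 := by
        rw [hkdef]
        push_cast
        have h3 := Nat.cast_div_le (α := ℝ) (m := 2 * n1 * M) (n := L)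
        push_cast at h3
        linarith
      have h3 : (2 * (n1 : ℝ) * M) / L = 2 * M / y' := by
        rw [hLcast]
        rw [div_eq_div_iff (ne_of_gt (mul_pos hn1R hy'posR)) (ne_of_gt hy'posR)]
        ring
      have h4 : 2 * (M : ℝ) / y' ≤ β * M / 2 := by
        rw [div_le_div_iff₀ hy'posR (by norm_num)]
        have h5 : 4 ≤ β * (y' : ℝ) := by
          rw [div_le_iff₀ hβ0] at hy4β
          linarith only [hy4β]
        have h6 : 4 * (M : ℝ) ≤ β * (y' : ℝ) * M :=
          mul_le_mul_of_nonneg_right h5 hMposR.le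
        linarith only [h6]
      calc (T.card : ℝ) ≤ k := h1
        _ ≤ (2 * (n1 : ℝ) * M) / L + 1 := h2
        _ = 2 * M / y' + 1 := by rw [h3]
        _ ≤ β * M / 2 + 1 := by linarith
        _ = β * (edgeCount G1 : ℝ) + 1 := by rw [he2]; ring
        _ ≤ β * (edgeCount G1 : ℝ) + β * (edgeCount G1 : ℝ) := by linarith
        _ = 2 * (β * (edgeCount G1 : ℝ)) := by ring
    have hΓ1R : ((n1 * D : ℕ) : ℝ) ≤ 300300 * (β * (edgeCount G1 : ℝ)) := by
      push_cast
      have h1 : (D : ℝ) ≤ 1001 * (β * d) := by linarith [hDub, hβd1]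
      have h2 : (0 : ℝ) ≤ 1001 * β := by linarith only [hβ0]
      calc (n1 : ℝ) * D ≤ n1 * (1001 * (β * d)) := mul_le_mul_of_nonneg_left h1 hn1R.le
        _ = 1001 * β * (n1 * d) := by ring
        _ ≤ 1001 * β * (300 * (edgeCount G1 : ℝ)) := mul_le_mul_of_nonneg_left hnd300 h2
        _ = 300300 * (β * (edgeCount G1 : ℝ)) := by ring
    calc (edgeCount Γ : ℝ) ≤ ((n1 * D + T.card : ℕ) : ℝ) := by exact_mod_cast hEdge
      _ = ((n1 * D : ℕ) : ℝ) + T.card := by push_cast; ring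
      _ ≤ 300300 * (β * (edgeCount G1 : ℝ)) + 2 * (β * (edgeCount G1 : ℝ)) :=
          add_le_add hΓ1R hkR
      _ ≤ 10 ^ 6 * β * (edgeCount G1 : ℝ) := by linarith only [he1]
end

section
/- Let G = (V,E) be a graph on n vertices and let H ⊆ G be a spanning subgraph. Suppose there exists a spanning subgraph Γ ⊆ G − H such that for every edge set E' ⊆ E(G − H − Γ) of cardinality |E'| ≤ n there exists a vertex v ∈ V (which may depend on E') satisfying |N_{G−(Γ+E')}(v) ∩ B_{Γ+E'}(v)| > d_H(v). Then G − H is Hamiltonian. -/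
open Filter Finset SimpleGraph
open scoped Classical

/-- Lemma 3.4: if some `Γ ⊆ G - H` has enough boosters surviving in `G - H` at every
stage, then `G - H` is Hamiltonian. -/
theorem stmt5 {n : ℕ} (G H Γ : SimpleGraph (Fin n)) (hH : H ≤ G) (hΓ : Γ ≤ G \ H)
    (hyp : ∀ E' : Finset (Sym2 (Fin n)),
      (E' : Set (Sym2 (Fin n))) ⊆ ((G \ H) \ Γ).edgeSet → E'.card ≤ n →
      ∃ v : Fin n, H.degree v <
        (((G \ (Γ ⊔ fromEdgeSet (E' : Set (Sym2 (Fin n))))).neighborFinset v) ∩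
          boosterSet (Γ ⊔ fromEdgeSet (E' : Set (Sym2 (Fin n)))) v).card) :
    (G \ H).IsHamiltonian := by
  classical
  -- n ≥ 1 since hyp produces a vertex
  obtain ⟨v0, -⟩ := hyp ∅ (by simp) (by simp)
  have hn : 1 ≤ n := v0.pos
  -- longest path is < n
  have hlp_lt : ∀ Γ' : SimpleGraph (Fin n), longestPath Γ' < n := by
    intro Γ'
    have hne : {l : ℕ | ∃ (u v : Fin n) (q : Γ'.Walk u v), q.IsPath ∧ q.length = l}.Nonempty :=
      ⟨0, v0, v0, Walk.nil, Walk.IsPath.nil, rfl⟩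
    have hbd : ∀ l ∈ {l : ℕ | ∃ (u v : Fin n) (q : Γ'.Walk u v), q.IsPath ∧ q.length = l},
        l ≤ n - 1 := by
      rintro l ⟨u, v, q, hq, rfl⟩
      have := hq.length_lt
      simp only [Fintype.card_fin] at this
      omega
    exact lt_of_le_of_lt (csSup_le hne hbd) (Nat.sub_lt hn one_pos)
  have key : ∀ k : ℕ, ∀ E' : Finset (Sym2 (Fin n)),
      (E' : Set (Sym2 (Fin n))) ⊆ ((G \ H) \ Γ).edgeSet →
      E'.card ≤ longestPath (Γ ⊔ fromEdgeSet (E' : Set (Sym2 (Fin n)))) →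
      n - longestPath (Γ ⊔ fromEdgeSet (E' : Set (Sym2 (Fin n)))) ≤ k →
      (G \ H).IsHamiltonian := by
    intro k
    induction k with
    | zero =>
      intro E' _ _ hk
      exact absurd (hlp_lt (Γ ⊔ fromEdgeSet (E' : Set (Sym2 (Fin n))))) (by omega)
    | succ k ih =>
      intro E' hsub hcard hk
      set Γ' := Γ ⊔ fromEdgeSet (E' : Set (Sym2 (Fin n))) with hΓ'
      have hΓ'le : Γ' ≤ G \ H := by
        refine sup_le hΓ ?_
        calc fromEdgeSet (E' : Set (Sym2 (Fin n)))
            ≤ fromEdgeSet ((G \ H) \ Γ).edgeSet := fromEdgeSet_mono hsub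
          _ = (G \ H) \ Γ := fromEdgeSet_edgeSet _
          _ ≤ G \ H := sdiff_le
      -- apply the hypothesis
      have hcard_n : E'.card ≤ n := hcard.trans (hlp_lt Γ').le
      obtain ⟨v, hv⟩ := hyp E' hsub hcard_n
      -- pick a booster neighbour not adjacent to v in H
      set S := ((G \ Γ').neighborFinset v) ∩ boosterSet Γ' v with hS
      have hdeg : H.degree v < S.card := hv
      have hsd : (S \ H.neighborFinset v).Nonempty := by
        rw [← Finset.card_pos]
        have h1 := Finset.le_card_sdiff (H.neighborFinset v) S
        rw [SimpleGraph.degree] at hdeg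
        omega
      obtain ⟨w, hw⟩ := hsd
      rw [Finset.mem_sdiff] at hw
      obtain ⟨hwS, hwH⟩ := hw
      rw [hS, Finset.mem_inter] at hwS
      obtain ⟨hwN, hwB⟩ := hwS
      rw [SimpleGraph.mem_neighborFinset, SimpleGraph.sdiff_adj] at hwN
      obtain ⟨hGvw, hΓ'vw⟩ := hwN
      have hHvw : ¬ H.Adj v w := fun h => hwH (SimpleGraph.mem_neighborFinset .. |>.2 h)
      have hΓvw : ¬ Γ.Adj v w := fun h => hΓ'vw (le_sup_left (a := Γ) h)
      have hB : IsBooster Γ' v w := (Finset.mem_filter.1 hwB).2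
      -- the new edge
      have hedge : s(v, w) ∈ ((G \ H) \ Γ).edgeSet := by
        rw [SimpleGraph.mem_edgeSet, SimpleGraph.sdiff_adj, SimpleGraph.sdiff_adj]
        exact ⟨⟨hGvw, hHvw⟩, hΓvw⟩
      have hnotE' : s(v, w) ∉ E' := by
        intro hmem
        exact hΓ'vw (le_sup_right (a := Γ)
          ((SimpleGraph.fromEdgeSet_adj _).2 ⟨hmem, hGvw.ne⟩))
      set E'' : Finset (Sym2 (Fin n)) := insert (s(v, w)) E' with hE''
      have hsub'' : (E'' : Set (Sym2 (Fin n))) ⊆ ((G \ H) \ Γ).edgeSet := by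
        rw [hE'', Finset.coe_insert, Set.insert_subset_iff]
        exact ⟨hedge, hsub⟩
      have hcard'' : E''.card = E'.card + 1 := Finset.card_insert_of_notMem hnotE'
      -- identify the graphs
      have hgraph : Γ ⊔ fromEdgeSet (E'' : Set (Sym2 (Fin n)))
          = Γ' ⊔ fromEdgeSet {s(v, w)} := by
        ext a b
        simp only [hE'', hΓ', Finset.coe_insert, Set.insert_eq, fromEdgeSet_union,
          SimpleGraph.sup_adj, SimpleGraph.fromEdgeSet_adj, Set.mem_singleton_iff,
          Finset.mem_coe]
        tauto
      obtain ⟨-, -, hham | hlong⟩ := hB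
      · -- Hamiltonian case
        have hle : Γ' ⊔ fromEdgeSet {s(v, w)} ≤ G \ H := by
          refine sup_le hΓ'le ?_
          calc fromEdgeSet {s(v, w)}
            ≤ fromEdgeSet ((G \ H) \ Γ).edgeSet :=
                fromEdgeSet_mono (Set.singleton_subset_iff.2 hedge)
          _ = (G \ H) \ Γ := fromEdgeSet_edgeSet _
          _ ≤ G \ H := sdiff_le
        have hham' := @SimpleGraph.IsHamiltonian.mono (Fin n)
          (fun a b => Classical.propDecidable (a = b)) _ _ _ hle hham
        convert hham' using 2 <;> exact Subsingleton.elim _ _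
      · -- longest path increases
        rw [← hgraph] at hlong
        refine ih E'' hsub'' ?_ ?_
        · omega
        · have := hlp_lt (Γ ⊔ fromEdgeSet (E'' : Set (Sym2 (Fin n))))
          omega
  exact key n ∅ (by simp) (by simp) (by omega)
end

section
/- For every fixed β with 0 < β ≤ 1/81 there exists an integer n₀ = n₀(β) > 0 such that for every n ≥ n₀, every graph G ∈ 𝓛(n,β) is connected. -/
open Filter Finset SimpleGraph
open scoped Classical

lemma closed_big {V : Type*} [Fintype V] (H : SimpleGraph V) (β : ℝ) (n1 : ℕ)
    (hβ0 : 0 < β) (hβ : β ≤ 1 / 81) (hn : 6 < β * n1)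
    (hexp : IsExpander H (β * n1) (fBeta β n1))
    (S : Finset V) (hS : S.Nonempty) (hcl : extNbhd H S = ∅) :
    (n1 : ℝ) / 2 < S.card := by
  have hn1R : (486 : ℝ) < n1 := by nlinarith
  have hn1pos : (2:ℕ) ≤ n1 := by exact_mod_cast (show (2:ℝ) ≤ (n1:ℝ) by linarith)
  -- step 1 : β * n1 < S.card
  have hbig : β * n1 < S.card := by
    by_contra hle
    push_neg at hle
    have h := hexp S hS hle
    rw [hcl] at h
    simp only [Finset.card_empty, Nat.cast_zero] at h
    have hf : 0 < fBeta β n1 S.card := by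
      unfold fBeta
      split_ifs with h1 h2
      · positivity
      · apply Real.rpow_pos_of_pos
        have : (1:ℝ) < n1 := by linarith
        exact Real.log_pos this
      · norm_num
    have hc : (0:ℝ) < S.card := by exact_mod_cast hS.card_pos
    nlinarith
  set k := Nat.floor (β * (n1:ℝ)) with hk
  have hk_le : (k : ℝ) ≤ β * n1 := Nat.floor_le (by positivity)
  have hk_lt : β * n1 - 1 < (k : ℝ) := Nat.sub_one_lt_floor _
  have hkS : k ≤ S.card := by
    have : (k : ℝ) < S.card := lt_of_le_of_lt hk_le hbig
    exact_mod_cast this.le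
  obtain ⟨U, hUS, hUcard⟩ := Finset.exists_subset_card_eq hkS
  have hUne : U.Nonempty := by
    rw [← Finset.card_pos, hUcard]
    have : (0:ℝ) < k := by linarith
    exact_mod_cast this
  have hexpU := hexp U hUne (by rw [hUcard]; exact hk_le)
  have hfU : fBeta β n1 U.card = 2 * (1 + 39 * β) / (3 * β) := by
    rw [hUcard]; unfold fBeta; rw [if_pos rfl]
  -- extNbhd H U ⊆ S
  have hsub : extNbhd H U ⊆ S := by
    intro v hv
    simp only [extNbhd, Finset.mem_filter, Finset.mem_univ, true_and] at hv
    obtain ⟨hvU, u, hu, hadj⟩ := hv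
    by_contra hvS
    have : v ∈ extNbhd H S := by
      simp only [extNbhd, Finset.mem_filter, Finset.mem_univ, true_and]
      exact ⟨hvS, u, hUS hu, hadj⟩
    rw [hcl] at this
    exact absurd this (Finset.notMem_empty v)
  have hdisj : Disjoint U (extNbhd H U) := by
    rw [Finset.disjoint_right]
    intro v hv
    simp only [extNbhd, Finset.mem_filter] at hv
    exact hv.2.1
  have hcard : U.card + (extNbhd H U).card ≤ S.card := by
    rw [← Finset.card_union_of_disjoint hdisj]
    exact Finset.card_le_card (Finset.union_subset hUS hsub)
  have hSR : (U.card : ℝ) + (extNbhd H U).card ≤ S.card := by exact_mod_cast hcard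
  rw [hfU, hUcard] at hexpU
  rw [hUcard] at hSR
  -- so S.card ≥ k + (2(1+39β)/(3β)) k = k (2+81β)/(3β) > (βn1 - 1)(2+81β)/(3β) > n1/2
  have key : (k:ℝ) + 2 * (1 + 39 * β) / (3 * β) * k ≤ S.card := by linarith
  have hfpos : (0:ℝ) ≤ 2 * (1 + 39 * β) / (3 * β) := by positivity
  have h3 : (0:ℝ) < 3 * β := by linarith
  have expand : ((k:ℝ) + 2 * (1 + 39 * β) / (3 * β) * k) = (k:ℝ) * (2 + 81*β) / (3*β) := by
    field_simp; ring
  rw [expand] at key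
  have : (n1:ℝ)/2 < (k:ℝ) * (2 + 81*β) / (3*β) := by
    rw [div_lt_div_iff₀ (by norm_num) h3]
    have hkb : β * n1 - 1 < k := hk_lt
    nlinarith [hkb, hn, hβ, hβ0, hn1R]
  linarith

lemma expander_preconnected {V : Type*} [Fintype V] (H : SimpleGraph V) (β : ℝ) (n1 : ℕ)
    (hβ0 : 0 < β) (hβ : β ≤ 1 / 81) (hn : 6 < β * n1) (hcard : Fintype.card V = n1)
    (hexp : IsExpander H (β * n1) (fBeta β n1)) : H.Preconnected := by
  intro u v
  by_contra hnr
  have closed : ∀ w : V, extNbhd H (Finset.univ.filter (fun x => H.Reachable w x)) = ∅ := by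
    intro w
    rw [Finset.eq_empty_iff_forall_notMem]
    intro x hx
    simp only [extNbhd, Finset.mem_filter, Finset.mem_univ, true_and] at hx
    obtain ⟨hxn, y, hy, hadj⟩ := hx
    exact hxn (hy.trans hadj.reachable)
  set Su := Finset.univ.filter (fun x => H.Reachable u x) with hSu
  set Sv := Finset.univ.filter (fun x => H.Reachable v x) with hSv
  have hu : u ∈ Su := by simp only [hSu, Finset.mem_filter, Finset.mem_univ, true_and]; exact Reachable.refl u
  have hv : v ∈ Sv := by simp only [hSv, Finset.mem_filter, Finset.mem_univ, true_and]; exact Reachable.refl v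
  have h1 := closed_big H β n1 hβ0 hβ hn hexp Su ⟨u, hu⟩ (closed u)
  have h2 := closed_big H β n1 hβ0 hβ hn hexp Sv ⟨v, hv⟩ (closed v)
  have hdisj : Disjoint Su Sv := by
    rw [Finset.disjoint_left]
    intro x hx hx'
    simp only [hSu, hSv, Finset.mem_filter, Finset.mem_univ, true_and] at hx hx'
    exact hnr (hx.trans hx'.symm)
  have : Su.card + Sv.card ≤ n1 := by
    rw [← Finset.card_union_of_disjoint hdisj, ← hcard, ← Finset.card_univ]
    exact Finset.card_le_card (Finset.subset_univ _)
  have : (Su.card : ℝ) + Sv.card ≤ n1 := by exact_mod_cast this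
  linarith

/-- (From the proof of Lemma 3.6): for fixed `0 < β ≤ 1/81` and `n` large, every graph
in `𝓛(n, β)` is connected. -/
theorem stmt7 (β : ℝ) (hβ0 : 0 < β) (hβ : β ≤ 1 / 81) :
    ∃ n0 : ℕ, 0 < n0 ∧ ∀ n : ℕ, n0 ≤ n → ∀ G : SimpleGraph (Fin n),
      ∀ V1 D : Finset (Fin n), InFamilyL n β G V1 D → G.Connected := by
  obtain ⟨m, hm⟩ : ∃ m : ℕ, (12 / β : ℝ) < m := exists_nat_gt _
  refine ⟨max 4 (m + 1), by omega, ?_⟩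
  intro n hn G V1 D hG
  obtain ⟨hdisj, hunion, hD, hD2, -, -, hexp⟩ := hG
  set n1 := V1.card with hn1
  have hcards : V1.card + D.card = n := by
    rw [← Finset.card_union_of_disjoint hdisj, hunion, Finset.card_univ, Fintype.card_fin]
  have hn4 : 4 ≤ n := le_trans (le_max_left _ _) hn
  have hmn : m + 1 ≤ n := le_trans (le_max_right _ _) hn
  have hnR : (12 / β : ℝ) < n := by
    calc (12 / β : ℝ) < m := hm
    _ ≤ n := by exact_mod_cast Nat.le_of_succ_le hmn
  have h12 : 12 < β * n := by
    rw [div_lt_iff₀ hβ0] at hnR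
    linarith
  have hn1' : (1:ℝ) ≤ n := by
    have : (4:ℝ) ≤ n := by exact_mod_cast hn4
    linarith
  have h1 : (n:ℝ) ^ (0.09:ℝ) ≤ (n:ℝ) ^ (0.5:ℝ) :=
    Real.rpow_le_rpow_of_exponent_le hn1' (by norm_num)
  have h2 : (n:ℝ) ^ (0.5:ℝ) = Real.sqrt n := by
    rw [Real.sqrt_eq_rpow]; norm_num
  have h3 : Real.sqrt n ≤ (n:ℝ) / 2 := by
    have h4 : (4:ℝ) ≤ n := by exact_mod_cast hn4
    have := Real.sqrt_le_sqrt (show (n:ℝ) ≤ ((n:ℝ)/2)^2 by nlinarith)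
    rwa [Real.sqrt_sq (by positivity)] at this
  have hDn : (D.card : ℝ) ≤ (n:ℝ) / 2 := by
    calc (D.card : ℝ) ≤ (n:ℝ) ^ (0.09:ℝ) := hD
    _ ≤ (n:ℝ) ^ (0.5:ℝ) := h1
    _ = Real.sqrt n := h2
    _ ≤ (n:ℝ)/2 := h3
  have hn1R : (n:ℝ)/2 ≤ n1 := by
    have : (n1:ℝ) + D.card = n := by exact_mod_cast hcards
    linarith
  have hβn1 : 6 < β * n1 := by nlinarith
  have hcardV1 : Fintype.card ↥(V1 : Set (Fin n)) = n1 := by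
    rw [hn1]; simp
  have hpre := expander_preconnected (G.induce (V1 : Set (Fin n))) β n1 hβ0 hβ hβn1 hcardV1 hexp
  have hreachV1 : ∀ a b : Fin n, a ∈ V1 → b ∈ V1 → G.Reachable a b := by
    intro a b ha hb
    have := (hpre ⟨a, Finset.mem_coe.2 ha⟩ ⟨b, Finset.mem_coe.2 hb⟩).map
      (SimpleGraph.Embedding.induce (V1 : Set (Fin n))).toHom
    simpa using this
  have hne : Nonempty (Fin n) := ⟨⟨0, by omega⟩⟩
  rw [connected_iff]
  refine ⟨?_, hne⟩
  intro a b
  have hstep : ∀ x : Fin n, ∃ y ∈ V1, G.Reachable x y := by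
    intro x
    have hx : x ∈ V1 ∪ D := by rw [hunion]; exact Finset.mem_univ x
    rcases Finset.mem_union.1 hx with h | h
    · exact ⟨x, h, Reachable.refl x⟩
    · have h2' := hD2 x h
      have : (G.neighborFinset x ∩ V1).Nonempty := Finset.card_pos.1 (by omega)
      obtain ⟨y, hy⟩ := this
      rw [Finset.mem_inter, SimpleGraph.mem_neighborFinset] at hy
      exact ⟨y, hy.2, hy.1.reachable⟩
  obtain ⟨a1, ha1, hra⟩ := hstep a
  obtain ⟨b1, hb1, hrb⟩ := hstep b
  exact (hra.trans (hreachV1 a1 b1 ha1 hb1)).trans hrb.symm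
end

section
/- If the edge-probability function satisfies p(n) ≥ ln n / n and t = t(n) is a function with t(n) ≤ n·p(n)/100, then with high probability a graph G sampled from G(n,p) satisfies |D_t(G)| ≤ n^{0.09}, where D_t(G) = {v : d_G(v) < t} is the set of vertices of degree less than t. -/
open Filter Finset SimpleGraph
open scoped Classical

/-- The set `D_t(G)` of vertices of degree less than `t`. -/
noncomputable def lowDegSet (n : ℕ) (t : ℝ) (G : SimpleGraph (Fin n)) : Finset (Fin n) :=
  Finset.univ.filter (fun v => (G.degree v : ℝ) < t)

lemma mass_one {ι : Type*} [DecidableEq ι] (E : Finset ι) (p : ℝ) :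
    ∑ s ∈ E.powerset, p ^ s.card * (1 - p) ^ (E.card - s.card) = 1 := by
  have h := Finset.prod_add (fun _ : ι => p) (fun _ => 1 - p) E
  simp only [Finset.prod_const, add_sub_cancel, one_pow] at h
  rw [Finset.sum_congr rfl (fun s hs => ?_), ← h]
  rw [Finset.card_sdiff_of_subset (Finset.mem_powerset.1 hs)]

lemma split_sum {ι : Type*} [DecidableEq ι] (E A : Finset ι) (hA : A ⊆ E) (f : ℕ → ℝ) (p : ℝ) :
    ∑ s ∈ E.powerset, f (s ∩ A).card * (p ^ s.card * (1 - p) ^ (E.card - s.card))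
      = ∑ a ∈ A.powerset, f a.card * (p ^ a.card * (1 - p) ^ (A.card - a.card)) := by
  have hcard : A.card + (E \ A).card = E.card := by
    have := Finset.card_le_card hA
    rw [Finset.card_sdiff_of_subset hA]; omega
  have key : ∑ s ∈ E.powerset, f (s ∩ A).card * (p ^ s.card * (1 - p) ^ (E.card - s.card))
      = ∑ q ∈ A.powerset ×ˢ (E \ A).powerset,
          (f q.1.card * (p ^ q.1.card * (1 - p) ^ (A.card - q.1.card)))
            * (p ^ q.2.card * (1 - p) ^ ((E \ A).card - q.2.card)) := by
    refine Finset.sum_nbij' (i := fun s => (s ∩ A, s \ A)) (j := fun q => q.1 ∪ q.2) ?_ ?_ ?_ ?_ ?_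
    · intro s hs
      rw [Finset.mem_powerset] at hs
      refine Finset.mem_product.2 ⟨Finset.mem_powerset.2 Finset.inter_subset_right,
        Finset.mem_powerset.2 ?_⟩
      exact fun x hx => Finset.mem_sdiff.2 ⟨hs (Finset.mem_sdiff.1 hx).1, (Finset.mem_sdiff.1 hx).2⟩
    · intro q hq
      rw [Finset.mem_product, Finset.mem_powerset, Finset.mem_powerset] at hq
      exact Finset.mem_powerset.2 (Finset.union_subset (hq.1.trans hA)
        (hq.2.trans (Finset.sdiff_subset)))
    · intro s _
      show (s ∩ A) ∪ (s \ A) = s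
      rw [Finset.union_comm, Finset.sdiff_union_inter]
    · intro q hq
      rw [Finset.mem_product, Finset.mem_powerset, Finset.mem_powerset] at hq
      obtain ⟨h1, h2⟩ := hq
      have hb : ∀ x ∈ q.2, x ∉ A := fun x hx => (Finset.mem_sdiff.1 (h2 hx)).2
      show ((q.1 ∪ q.2) ∩ A, (q.1 ∪ q.2) \ A) = q
      have e1 : (q.1 ∪ q.2) ∩ A = q.1 := by
        ext x
        simp only [Finset.mem_inter, Finset.mem_union]
        constructor
        · rintro ⟨h | h, hA'⟩
          · exact h
          · exact absurd hA' (hb x h)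
        · intro h; exact ⟨Or.inl h, h1 h⟩
      have e2 : (q.1 ∪ q.2) \ A = q.2 := by
        ext x
        simp only [Finset.mem_sdiff, Finset.mem_union]
        constructor
        · rintro ⟨h | h, hA'⟩
          · exact absurd (h1 h) hA'
          · exact h
        · intro h; exact ⟨Or.inr h, hb x h⟩
      rw [e1, e2]
    · intro s hs
      rw [Finset.mem_powerset] at hs
      dsimp only
      have h1 : (s ∩ A).card + (s \ A).card = s.card := Finset.card_inter_add_card_sdiff s A
      have h2 : (s ∩ A).card ≤ A.card := Finset.card_le_card Finset.inter_subset_right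
      have h3 : (s \ A).card ≤ (E \ A).card :=
        Finset.card_le_card (fun x hx => Finset.mem_sdiff.2
          ⟨hs (Finset.mem_sdiff.1 hx).1, (Finset.mem_sdiff.1 hx).2⟩)
      have h4 : s.card ≤ E.card := Finset.card_le_card hs
      have hexp : E.card - s.card = (A.card - (s ∩ A).card) + ((E \ A).card - (s \ A).card) := by
        omega
      rw [hexp, ← h1, pow_add, pow_add]
      ring
  rw [key, Finset.sum_product]
  refine Finset.sum_congr rfl fun a _ => ?_
  dsimp only
  rw [← Finset.mul_sum, mass_one, mul_one]

lemma sum_graph (n : ℕ) (F : Finset (Sym2 (Fin n)) → ℝ) :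
    ∑ G : SimpleGraph (Fin n), F G.edgeFinset
      = ∑ s ∈ (⊤ : SimpleGraph (Fin n)).edgeFinset.powerset, F s := by
  refine Finset.sum_nbij' (i := fun G => G.edgeFinset)
    (j := fun s => SimpleGraph.fromEdgeSet (s : Set (Sym2 (Fin n)))) ?_ ?_ ?_ ?_ ?_
  · intro G _
    exact Finset.mem_powerset.2 (SimpleGraph.edgeFinset_mono le_top)
  · intro s _; exact Finset.mem_univ _
  · intro G _
    show SimpleGraph.fromEdgeSet (↑G.edgeFinset) = G
    rw [SimpleGraph.coe_edgeFinset, SimpleGraph.fromEdgeSet_edgeSet]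
  · intro s hs
    apply Finset.coe_injective
    rw [SimpleGraph.coe_edgeFinset, SimpleGraph.edgeSet_fromEdgeSet]
    rw [Finset.mem_powerset] at hs
    rw [sdiff_eq_left]
    rw [Set.disjoint_left]
    intro e hes he
    have h2 : e ∈ (⊤ : SimpleGraph (Fin n)).edgeSet := by
      rw [← SimpleGraph.mem_edgeFinset]; exact hs hes
    rw [SimpleGraph.edgeSet_top, Set.mem_compl_iff] at h2
    exact h2 he
  · intro G _; rfl

lemma card_Sv (n : ℕ) (v : Fin n) :
    ((⊤ : SimpleGraph (Fin n)).edgeFinset.filter (fun e => v ∈ e)).card = n - 1 := by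
  rw [← SimpleGraph.incidenceFinset_eq_filter, SimpleGraph.card_incidenceFinset_eq_degree,
    SimpleGraph.complete_graph_degree, Fintype.card_fin]

lemma total_mass (n : ℕ) (p : ℝ) :
    ∑ G : SimpleGraph (Fin n), gnpWeight n p G = 1 := by
  have h : ∀ G : SimpleGraph (Fin n), gnpWeight n p G
      = (fun s : Finset (Sym2 (Fin n)) =>
          p ^ s.card * (1 - p) ^ ((⊤ : SimpleGraph (Fin n)).edgeFinset.card - s.card))
        G.edgeFinset := by
    intro G
    rw [gnpWeight]
    congr 2
    rw [SimpleGraph.card_edgeFinset_top_eq_card_choose_two, Fintype.card_fin]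
  rw [Finset.sum_congr rfl (fun G _ => h G),
    sum_graph n (fun s => p ^ s.card * (1 - p) ^ ((⊤ : SimpleGraph (Fin n)).edgeFinset.card - s.card)),
    mass_one]

lemma Pv_eq (n : ℕ) (p t : ℝ) (v : Fin n) :
    ∑ G : SimpleGraph (Fin n), (if (G.degree v : ℝ) < t then (1:ℝ) else 0) * gnpWeight n p G
      = ∑ m ∈ Finset.range (n - 1 + 1), (if (m : ℝ) < t then (1:ℝ) else 0)
          * ((n - 1).choose m * (p ^ m * (1 - p) ^ (n - 1 - m))) := by
  set S := (⊤ : SimpleGraph (Fin n)).edgeFinset with hS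
  set A := S.filter (fun e => v ∈ e) with hAdef
  have hA : A ⊆ S := Finset.filter_subset _ _
  have hAcard : A.card = n - 1 := card_Sv n v
  set f : ℕ → ℝ := fun k => if (k : ℝ) < t then (1:ℝ) else 0 with hf
  have hdeg : ∀ G : SimpleGraph (Fin n), (G.edgeFinset ∩ A).card = G.degree v := by
    intro G
    rw [← SimpleGraph.card_incidenceFinset_eq_degree]
    congr 1
    rw [SimpleGraph.incidenceFinset_eq_filter]
    ext e
    simp only [Finset.mem_inter, Finset.mem_filter, hAdef, hS, SimpleGraph.mem_edgeFinset]
    constructor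
    · rintro ⟨h1, _, h3⟩; exact ⟨h1, h3⟩
    · intro ⟨h1, h3⟩; exact ⟨h1, ⟨(SimpleGraph.edgeSet_mono le_top h1 : _), h3⟩⟩
  have step1 : ∀ G : SimpleGraph (Fin n),
      (if (G.degree v : ℝ) < t then (1:ℝ) else 0) * gnpWeight n p G
      = (fun s : Finset (Sym2 (Fin n)) =>
          f (s ∩ A).card * (p ^ s.card * (1 - p) ^ (S.card - s.card))) G.edgeFinset := by
    intro G
    dsimp only
    rw [hdeg G, gnpWeight, hf]
    congr 3
    rw [hS, SimpleGraph.card_edgeFinset_top_eq_card_choose_two, Fintype.card_fin]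
  rw [Finset.sum_congr rfl (fun G _ => step1 G), sum_graph n (fun s => f (s ∩ A).card * (p ^ s.card * (1 - p) ^ (S.card - s.card))),
    split_sum S A hA f p]
  rw [Finset.sum_powerset_apply_card (f := fun m => f m * (p ^ m * (1 - p) ^ (A.card - m)))]
  rw [hAcard]
  refine Finset.sum_congr rfl fun m _ => ?_
  rw [nsmul_eq_mul, hf]
  ring

lemma tail_bound (n : ℕ) (hn : 51 ≤ n) (p t : ℝ) (hp0 : 0 ≤ p) (hp1 : p ≤ 1)
    (hplog : Real.log n / n ≤ p) (ht : t ≤ n * p / 100) :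
    ∑ m ∈ Finset.range (n - 1 + 1), (if (m : ℝ) < t then (1:ℝ) else 0)
        * ((n - 1).choose m * (p ^ m * (1 - p) ^ (n - 1 - m)))
      ≤ Real.exp 0.92 * (n : ℝ) ^ (-(0.92) : ℝ) := by
  set M : ℕ := n - 1 with hM
  have hMn : (M : ℝ) = (n : ℝ) - 1 := by
    rw [hM, Nat.cast_sub (by omega)]; norm_num
  have hnpos : (0:ℝ) < n := by positivity
  have hx0 : 0 ≤ (M : ℝ) * p * Real.exp 1 / 1024 := by positivity
  set x : ℝ := (M : ℝ) * p * Real.exp 1 / 1024 with hxdef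
  set c : ℝ := Real.exp (-(p * M)) * (1024 : ℝ) ^ t with hcdef
  have hc0 : 0 < c := by
    rw [hcdef]; positivity
  have hterm : ∀ m ∈ Finset.range (M + 1),
      (if (m : ℝ) < t then (1:ℝ) else 0) * ((M).choose m * (p ^ m * (1 - p) ^ (M - m)))
        ≤ c * (x ^ m / m.factorial) := by
    intro m hm
    rw [Finset.mem_range] at hm
    have hmM : m ≤ M := by omega
    by_cases hmt : (m : ℝ) < t
    · rw [if_pos hmt, one_mul]
      have h1 : ((M.choose m : ℝ)) ≤ (M : ℝ) ^ m / m.factorial := by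
        exact_mod_cast Nat.choose_le_pow_div m M
      have h2 : (1 - p) ^ (M - m) ≤ Real.exp (-(p * (M - m : ℕ))) := by
        calc (1 - p) ^ (M - m) ≤ Real.exp (-p) ^ (M - m) := by
              apply pow_le_pow_left₀ (by linarith)
              linarith [Real.add_one_le_exp (-p)]
          _ = Real.exp ((M - m : ℕ) * (-p)) := by rw [← Real.exp_nat_mul]
          _ = Real.exp (-(p * (M - m : ℕ))) := by congr 1; ring
      have hcast : ((M - m : ℕ) : ℝ) = (M : ℝ) - m := by
        rw [Nat.cast_sub hmM]
      have h3 : Real.exp (-(p * (M - m : ℕ))) = Real.exp (-(p * M)) * Real.exp p ^ m := by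
        rw [← Real.exp_nat_mul, ← Real.exp_add]
        congr 1
        rw [hcast]
        ring
      have h4 : (1024 : ℝ) ^ (m : ℕ) ≤ (1024 : ℝ) ^ t := by
        rw [← Real.rpow_natCast 1024 m]
        exact Real.rpow_le_rpow_of_exponent_le (by norm_num) (le_of_lt hmt)
      have hfac : (0:ℝ) < m.factorial := by positivity
      calc (M.choose m : ℝ) * (p ^ m * (1 - p) ^ (M - m))
          ≤ ((M:ℝ) ^ m / m.factorial) * (p ^ m * (Real.exp (-(p * M)) * Real.exp p ^ m)) := by
            rw [← h3]
            apply mul_le_mul h1 (mul_le_mul_of_nonneg_left h2 (by positivity))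
              (mul_nonneg (by positivity) (pow_nonneg (by linarith) _)) (by positivity)
        _ = Real.exp (-(p * M)) * (((M:ℝ) * p * Real.exp p) ^ m / m.factorial) := by
            rw [mul_pow, mul_pow]; ring
        _ ≤ Real.exp (-(p * M)) * (((M:ℝ) * p * Real.exp 1) ^ m / m.factorial) := by
            apply mul_le_mul_of_nonneg_left _ (by positivity)
            apply div_le_div_of_nonneg_right _ hfac.le
            apply pow_le_pow_left₀ (by positivity)
            apply mul_le_mul_of_nonneg_left (Real.exp_le_exp.2 hp1) (by positivity)
        _ = Real.exp (-(p * M)) * ((1024:ℝ) ^ (m:ℕ) * (x ^ m / m.factorial)) := by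
            have hxx : (1024:ℝ) ^ (m:ℕ) * x ^ m = ((M:ℝ) * p * Real.exp 1) ^ m := by
              rw [hxdef, div_pow, mul_comm,
                div_mul_cancel₀ _ (by positivity : ((1024:ℝ)) ^ m ≠ 0)]
            rw [← hxx]
            ring
        _ ≤ Real.exp (-(p * M)) * ((1024:ℝ) ^ t * (x ^ m / m.factorial)) := by
            apply mul_le_mul_of_nonneg_left _ (by positivity)
            apply mul_le_mul_of_nonneg_right h4 (by positivity)
        _ = c * (x ^ m / m.factorial) := by rw [hcdef]; ring
    · rw [if_neg hmt, zero_mul]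
      positivity
  calc ∑ m ∈ Finset.range (M + 1), (if (m : ℝ) < t then (1:ℝ) else 0)
        * ((M).choose m * (p ^ m * (1 - p) ^ (M - m)))
      ≤ ∑ m ∈ Finset.range (M + 1), c * (x ^ m / m.factorial) := Finset.sum_le_sum hterm
    _ = c * ∑ m ∈ Finset.range (M + 1), (x ^ m / m.factorial) := by rw [Finset.mul_sum]
    _ ≤ c * Real.exp x := by
        apply mul_le_mul_of_nonneg_left (Real.sum_le_exp_of_nonneg hx0 _) (le_of_lt hc0)
    _ ≤ Real.exp 0.92 * (n : ℝ) ^ (-(0.92) : ℝ) := by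
        rw [hcdef, Real.rpow_def_of_pos (by norm_num : (0:ℝ) < 1024),
          Real.rpow_def_of_pos hnpos, ← Real.exp_add, ← Real.exp_add, ← Real.exp_add]
        apply Real.exp_le_exp.2
        -- -(p*M) + t * log 1024 + x ≤ 0.92 + (-0.92) * log n
        have hlogn : Real.log n ≤ p * n := by
          rw [div_le_iff₀ hnpos] at hplog; linarith
        have hlog2 : Real.log 1024 < 6.93148 := by
          have h := Real.log_two_lt_d9
          have : (1024:ℝ) = 2 ^ 10 := by norm_num
          rw [this, Real.log_pow]
          push_cast
          linarith
        have hlog1024pos : 0 < Real.log 1024 := Real.log_pos (by norm_num)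
        have he : Real.exp 1 < 2.71828183 := by linarith [Real.exp_one_lt_d9]
        have hpM : p * M = p * n - p := by rw [hMn]; ring
        have hpM0 : 0 ≤ p * M := by positivity
        have hnp : (n:ℝ) * p ≤ 1.02 * (p * M) := by
          rw [hpM]
          have : p * 51 ≤ p * n := by
            apply mul_le_mul_of_nonneg_left _ hp0
            exact_mod_cast Nat.cast_le.2 hn
          nlinarith
        have ht2 : t * Real.log 1024 ≤ (n * p / 100) * Real.log 1024 :=
          mul_le_mul_of_nonneg_right ht (le_of_lt hlog1024pos)
        have hx2 : x ≤ (p * M) * 2.71828183 / 1024 := by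
          rw [hxdef]
          have : (M:ℝ) * p * Real.exp 1 ≤ (M:ℝ) * p * 2.71828183 := by
            apply mul_le_mul_of_nonneg_left (le_of_lt he) (by positivity)
          linarith
        have hlogn1 : Real.log n - 1 ≤ p * M := by
          rw [hpM]; linarith
        have hlognpos : 0 ≤ Real.log n := Real.log_nonneg (by exact_mod_cast Nat.one_le_cast.2 (by omega))
        nlinarith [mul_le_mul_of_nonneg_right hnp (le_of_lt hlog1024pos),
          mul_le_mul_of_nonneg_left (le_of_lt hlog2) hpM0]

/-- Claim 4.3: for `p ≥ ln n / n` and `t ≤ np/100`, w.h.p. `|D_t(G)| ≤ n^{0.09}`. -/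
theorem stmt9 (p : ℕ → ℝ) (t : ℕ → ℝ) (hp0 : ∀ n, 0 ≤ p n) (hp1 : ∀ n, p n ≤ 1)
    (hp : ∀ n : ℕ, Real.log n / n ≤ p n) (ht : ∀ n : ℕ, t n ≤ n * p n / 100) :
    WHP p (fun n G => ((lowDegSet n (t n) G).card : ℝ) ≤ (n : ℝ) ^ (0.09 : ℝ)) := by
  have hw0 : ∀ n (G : SimpleGraph (Fin n)), 0 ≤ gnpWeight n (p n) G := by
    intro n G
    unfold gnpWeight
    exact mul_nonneg (pow_nonneg (hp0 n) _) (pow_nonneg (by linarith [hp1 n]) _)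
  set bad : ∀ n : ℕ, SimpleGraph (Fin n) → Prop :=
    fun n G => (n : ℝ) ^ (0.09 : ℝ) < ((lowDegSet n (t n) G).card : ℝ) with hbad
  -- complement identity
  have hcompl : ∀ n, gnpProb n (p n)
      (fun G => ((lowDegSet n (t n) G).card : ℝ) ≤ (n : ℝ) ^ (0.09 : ℝ))
      = 1 - gnpProb n (p n) (bad n) := by
    intro n
    have hsum : gnpProb n (p n)
        (fun G => ((lowDegSet n (t n) G).card : ℝ) ≤ (n : ℝ) ^ (0.09 : ℝ))
        + gnpProb n (p n) (bad n) = 1 := by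
      rw [gnpProb, gnpProb, ← Finset.sum_add_distrib, ← total_mass n (p n)]
      refine Finset.sum_congr rfl fun G _ => ?_
      by_cases h : ((lowDegSet n (t n) G).card : ℝ) ≤ (n : ℝ) ^ (0.09 : ℝ)
      · rw [if_pos h, if_neg (by rw [hbad]; exact not_lt.2 h), add_zero]
      · rw [if_neg h, if_pos (by rw [hbad]; exact not_le.1 h), zero_add]
    linarith
  have hnonneg : ∀ n, 0 ≤ gnpProb n (p n) (bad n) := by
    intro n
    apply Finset.sum_nonneg
    intro G _
    by_cases h : bad n G
    · rw [if_pos h]; exact hw0 n G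
    · rw [if_neg h]
  have hub : ∀ n : ℕ, 51 ≤ n → gnpProb n (p n) (bad n) ≤ 3 * (n : ℝ) ^ (-(0.01) : ℝ) := by
    intro n hn
    have hnpos : (0:ℝ) < n := by positivity
    have hr9pos : (0:ℝ) < (n : ℝ) ^ (0.09 : ℝ) := Real.rpow_pos_of_pos hnpos _
    have hDcard : ∀ G : SimpleGraph (Fin n), ((lowDegSet n (t n) G).card : ℝ)
        = ∑ v : Fin n, (if ((G.degree v : ℝ) < t n) then (1:ℝ) else 0) := by
      intro G
      rw [lowDegSet, Finset.card_filter]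
      push_cast
      rfl
    have step1 : gnpProb n (p n) (bad n)
        ≤ (n:ℝ) ^ (-(0.09) : ℝ) * ∑ G : SimpleGraph (Fin n),
            ((lowDegSet n (t n) G).card : ℝ) * gnpWeight n (p n) G := by
      rw [gnpProb, Finset.mul_sum]
      refine Finset.sum_le_sum fun G _ => ?_
      by_cases h : bad n G
      · rw [if_pos h]
        have h1 : (1:ℝ) ≤ (n:ℝ) ^ (-(0.09) : ℝ) * ((lowDegSet n (t n) G).card : ℝ) := by
          rw [Real.rpow_neg hnpos.le]
          rw [← div_eq_inv_mul, le_div_iff₀ hr9pos, one_mul]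
          exact le_of_lt h
        calc gnpWeight n (p n) G = 1 * gnpWeight n (p n) G := by ring
          _ ≤ ((n:ℝ) ^ (-(0.09) : ℝ) * ((lowDegSet n (t n) G).card : ℝ)) * gnpWeight n (p n) G :=
              mul_le_mul_of_nonneg_right h1 (hw0 n G)
          _ = (n:ℝ) ^ (-(0.09) : ℝ) * (((lowDegSet n (t n) G).card : ℝ) * gnpWeight n (p n) G) := by
              ring
      · rw [if_neg h]
        have := hw0 n G
        positivity
    have step2 : ∑ G : SimpleGraph (Fin n),
        ((lowDegSet n (t n) G).card : ℝ) * gnpWeight n (p n) G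
        ≤ (n:ℝ) * (Real.exp 0.92 * (n : ℝ) ^ (-(0.92) : ℝ)) := by
      calc ∑ G : SimpleGraph (Fin n), ((lowDegSet n (t n) G).card : ℝ) * gnpWeight n (p n) G
          = ∑ G : SimpleGraph (Fin n), ∑ v : Fin n,
              (if ((G.degree v : ℝ) < t n) then (1:ℝ) else 0) * gnpWeight n (p n) G := by
            refine Finset.sum_congr rfl fun G _ => ?_
            rw [hDcard G, Finset.sum_mul]
        _ = ∑ v : Fin n, ∑ G : SimpleGraph (Fin n),
              (if ((G.degree v : ℝ) < t n) then (1:ℝ) else 0) * gnpWeight n (p n) G :=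
            Finset.sum_comm
        _ ≤ ∑ _v : Fin n, Real.exp 0.92 * (n : ℝ) ^ (-(0.92) : ℝ) := by
            refine Finset.sum_le_sum fun v _ => ?_
            rw [Pv_eq n (p n) (t n) v]
            exact tail_bound n hn (p n) (t n) (hp0 n) (hp1 n) (hp n) (ht n)
        _ = (n:ℝ) * (Real.exp 0.92 * (n : ℝ) ^ (-(0.92) : ℝ)) := by
            rw [Finset.sum_const, Finset.card_univ, Fintype.card_fin, nsmul_eq_mul]
    have hexp3 : Real.exp 0.92 ≤ 3 := by
      calc Real.exp 0.92 ≤ Real.exp 1 := Real.exp_le_exp.2 (by norm_num)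
        _ ≤ 3 := by linarith [Real.exp_one_lt_d9]
    calc gnpProb n (p n) (bad n)
        ≤ (n:ℝ) ^ (-(0.09) : ℝ) * ((n:ℝ) * (Real.exp 0.92 * (n : ℝ) ^ (-(0.92) : ℝ))) := by
          refine le_trans step1 (mul_le_mul_of_nonneg_left step2 ?_)
          positivity
      _ = Real.exp 0.92 * ((n:ℝ) ^ (-(0.09) : ℝ) * (n:ℝ) ^ (1 : ℝ) * (n:ℝ) ^ (-(0.92) : ℝ)) := by
          rw [Real.rpow_one]; ring
      _ = Real.exp 0.92 * (n:ℝ) ^ (-(0.01) : ℝ) := by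
          rw [← Real.rpow_add hnpos, ← Real.rpow_add hnpos]
          norm_num
      _ ≤ 3 * (n:ℝ) ^ (-(0.01) : ℝ) := by
          apply mul_le_mul_of_nonneg_right hexp3
          positivity
  have hto0 : Tendsto (fun n : ℕ => 3 * (n:ℝ) ^ (-(0.01) : ℝ)) atTop (nhds 0) := by
    have h1 : Tendsto (fun x : ℝ => x ^ (-(0.01) : ℝ)) atTop (nhds 0) :=
      tendsto_rpow_neg_atTop (by norm_num)
    have h2 := (h1.comp tendsto_natCast_atTop_atTop).const_mul (3:ℝ)
    simpa using h2
  have hbadto : Tendsto (fun n => gnpProb n (p n) (bad n)) atTop (nhds 0) := by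
    apply tendsto_of_tendsto_of_tendsto_of_le_of_le' tendsto_const_nhds hto0
    · exact Eventually.of_forall hnonneg
    · filter_upwards [eventually_ge_atTop 51] with n hn using hub n hn
  rw [WHP]
  have := (tendsto_const_nhds (x := (1:ℝ)) (f := atTop)).sub hbadto
  rw [sub_zero] at this
  refine this.congr fun n => ?_
  rw [hcompl n]
end

section
/- If the edge-probability function satisfies p(n) ≥ ln n / n, then with high probability a graph G sampled from G(n,p) has the property that every vertex set U with |U| ≤ n^{0.11}·ln n spans at most (np)^{3/25}·|U| edges, i.e. e_G(U) ≤ (np)^{3/25}·|U|. -/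
open Filter Finset SimpleGraph
open scoped Classical

-- transfer sum over graphs to sum over edge subsets
lemma sum_graph_eq {n : ℕ} (f : Finset (Sym2 (Fin n)) → ℝ) :
    ∑ G : SimpleGraph (Fin n), f G.edgeFinset
      = ∑ s ∈ (⊤ : SimpleGraph (Fin n)).edgeFinset.powerset, f s := by
  refine Finset.sum_nbij' (i := fun G => G.edgeFinset)
    (j := fun s => SimpleGraph.fromEdgeSet (s : Set (Sym2 (Fin n)))) ?_ ?_ ?_ ?_ ?_
  · intro G _
    simpa [Finset.mem_powerset] using SimpleGraph.edgeFinset_mono (le_top (a := G))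
  · intro s _; exact Finset.mem_univ _
  · intro G _
    show SimpleGraph.fromEdgeSet (G.edgeFinset : Set (Sym2 (Fin n))) = G
    rw [SimpleGraph.coe_edgeFinset, SimpleGraph.fromEdgeSet_edgeSet]
  · intro s hs
    rw [Finset.mem_powerset] at hs
    have h1 : (SimpleGraph.fromEdgeSet (s : Set (Sym2 (Fin n)))).edgeSet = (s : Set (Sym2 (Fin n))) := by
      rw [SimpleGraph.edgeSet_fromEdgeSet]
      ext e
      simp only [Set.mem_diff, Finset.mem_coe, Set.mem_setOf_eq, and_iff_left_iff_imp]
      intro he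
      exact SimpleGraph.not_isDiag_of_mem_edgeSet (⊤ : SimpleGraph (Fin n))
        (SimpleGraph.mem_edgeFinset.mp (hs he))
    have h2 : (SimpleGraph.fromEdgeSet (s : Set (Sym2 (Fin n)))).edgeFinset = s := by
      apply Finset.coe_injective
      rw [SimpleGraph.coe_edgeFinset, h1]
    convert h2 using 2
  · intro G _; rfl

lemma weight_nonneg {n : ℕ} {p : ℝ} (hp0 : 0 ≤ p) (hp1 : p ≤ 1) (G : SimpleGraph (Fin n)) :
    0 ≤ gnpWeight n p G := by
  unfold gnpWeight
  have : (0:ℝ) ≤ 1 - p := by linarith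
  positivity

lemma gnpProb_superset {n : ℕ} {p : ℝ} (S : Finset (Sym2 (Fin n))) (hS : S ⊆ (⊤ : SimpleGraph (Fin n)).edgeFinset) :
    gnpProb n p (fun G => S ⊆ G.edgeFinset) = p ^ S.card := by
  set E := (⊤ : SimpleGraph (Fin n)).edgeFinset with hE
  have hN : E.card = n.choose 2 := by
    rw [hE, SimpleGraph.card_edgeFinset_top_eq_card_choose_two, Fintype.card_fin]
  have step1 : gnpProb n p (fun G => S ⊆ G.edgeFinset)
      = ∑ s ∈ E.powerset, (if S ⊆ s then p ^ s.card * (1 - p) ^ (n.choose 2 - s.card) else 0) := by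
    unfold gnpProb gnpWeight
    convert sum_graph_eq (fun s => if S ⊆ s then p ^ s.card * (1 - p) ^ (n.choose 2 - s.card) else 0)
      using 2
    rename_i G _
    by_cases h : S ⊆ G.edgeFinset <;> simp [h]
  rw [step1, ← Finset.sum_filter]
  set A := E \ S with hA
  have key : ∑ s ∈ E.powerset.filter (fun s => S ⊆ s),
        p ^ s.card * (1 - p) ^ (n.choose 2 - s.card)
      = ∑ F ∈ A.powerset, p ^ (S.card + F.card) * (1 - p) ^ ((A \ F).card) := by
    refine Finset.sum_nbij' (i := fun s => s \ S) (j := fun F => S ∪ F) ?_ ?_ ?_ ?_ ?_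
    · intro s hs
      simp only [Finset.mem_filter, Finset.mem_powerset] at hs
      exact Finset.mem_powerset.mpr (Finset.sdiff_subset_sdiff hs.1 (le_refl S))
    · intro F hF
      simp only [Finset.mem_powerset] at hF
      simp only [Finset.mem_filter, Finset.mem_powerset]
      exact ⟨Finset.union_subset hS (hF.trans Finset.sdiff_subset), Finset.subset_union_left⟩
    · intro s hs
      simp only [Finset.mem_filter, Finset.mem_powerset] at hs
      exact Finset.union_sdiff_of_subset hs.2
    · intro F hF
      simp only [Finset.mem_powerset] at hF
      exact Finset.union_sdiff_cancel_left
        (Finset.disjoint_of_subset_right hF Finset.sdiff_disjoint.symm)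
    · intro s hs
      simp only [Finset.mem_filter, Finset.mem_powerset] at hs
      have h1 : S.card + (s \ S).card = s.card := by
        rw [add_comm]; exact Finset.card_sdiff_add_card_eq_card hs.2
      have h2 : A \ (s \ S) = E \ s := by
        ext e
        simp only [hA, Finset.mem_sdiff]
        constructor
        · rintro ⟨⟨he, hns⟩, hn⟩
          exact ⟨he, fun hes => hn ⟨hes, hns⟩⟩
        · rintro ⟨he, hns⟩
          exact ⟨⟨he, fun hS' => hns (hs.2 hS')⟩, fun h => hns h.1⟩
      have h3 : (E \ s).card = n.choose 2 - s.card := by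
        rw [Finset.card_sdiff_of_subset hs.1, hN]
      rw [h1, h2, h3]
  rw [key]
  have expand : ∀ F ∈ A.powerset, p ^ (S.card + F.card) * (1 - p) ^ ((A \ F).card)
      = p ^ S.card * (p ^ F.card * (1 - p) ^ ((A \ F).card)) := by
    intro F _; rw [pow_add, mul_assoc]
  rw [Finset.sum_congr rfl expand, ← Finset.mul_sum]
  have binom : ∑ F ∈ A.powerset, p ^ F.card * (1 - p) ^ ((A \ F).card) = 1 := by
    have := Finset.prod_add (fun _ : Sym2 (Fin n) => p) (fun _ => 1 - p) A
    simp only [Finset.prod_const] at this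
    rw [← this, add_sub_cancel]
    norm_num
  rw [binom, mul_one]


lemma ite_weight_nonneg {n : ℕ} {p : ℝ} (hp0 : 0 ≤ p) (hp1 : p ≤ 1)
    (c : Prop) [Decidable c] (G : SimpleGraph (Fin n)) :
    0 ≤ if c then gnpWeight n p G else 0 := by
  split
  · exact weight_nonneg hp0 hp1 G
  · exact le_rfl

lemma gnpProb_congr {n : ℕ} {p : ℝ} {A B : SimpleGraph (Fin n) → Prop}
    (h : ∀ G, A G ↔ B G) : gnpProb n p A = gnpProb n p B := by
  unfold gnpProb
  exact Finset.sum_congr rfl fun G _ => if_congr (h G) rfl rfl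

lemma gnpProb_total {n : ℕ} {p : ℝ} : gnpProb n p (fun _ => True) = 1 := by
  have h := gnpProb_superset (n := n) (p := p) (S := ∅) (Finset.empty_subset _)
  rw [Finset.card_empty, pow_zero] at h
  rw [← h]
  exact gnpProb_congr fun G => by simp

lemma gnpProb_nonneg {n : ℕ} {p : ℝ} (hp0 : 0 ≤ p) (hp1 : p ≤ 1)
    (A : SimpleGraph (Fin n) → Prop) : 0 ≤ gnpProb n p A :=
  Finset.sum_nonneg fun G _ => ite_weight_nonneg hp0 hp1 _ G

lemma gnpProb_add_compl {n : ℕ} {p : ℝ} (A : SimpleGraph (Fin n) → Prop) :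
    gnpProb n p A + gnpProb n p (fun G => ¬ A G) = 1 := by
  have h := gnpProb_total (n := n) (p := p)
  unfold gnpProb at h ⊢
  rw [← Finset.sum_add_distrib]
  rw [← h]
  refine Finset.sum_congr rfl fun G _ => ?_
  by_cases hA : A G <;> simp [hA]

lemma gnpProb_le_one {n : ℕ} {p : ℝ} (hp0 : 0 ≤ p) (hp1 : p ≤ 1)
    (A : SimpleGraph (Fin n) → Prop) : gnpProb n p A ≤ 1 := by
  have h := gnpProb_add_compl (n := n) (p := p) A
  nlinarith [gnpProb_nonneg hp0 hp1 (fun G => ¬ A G)]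

lemma gnpProb_union_bound {n : ℕ} {p : ℝ} (hp0 : 0 ≤ p) (hp1 : p ≤ 1)
    {ι : Type*} (I : Finset ι) (A : SimpleGraph (Fin n) → Prop)
    (B : ι → SimpleGraph (Fin n) → Prop)
    (h : ∀ G, A G → ∃ i ∈ I, B i G) :
    gnpProb n p A ≤ ∑ i ∈ I, gnpProb n p (B i) := by
  unfold gnpProb
  rw [Finset.sum_comm]
  apply Finset.sum_le_sum
  intro G _
  by_cases hA : A G
  · obtain ⟨i, hi, hBi⟩ := h G hA
    rw [if_pos hA]
    calc gnpWeight n p G = (if B i G then gnpWeight n p G else 0) := (if_pos hBi).symm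
      _ ≤ ∑ j ∈ I, if B j G then gnpWeight n p G else 0 :=
        Finset.single_le_sum (f := fun j => if B j G then gnpWeight n p G else 0)
          (fun j _ => ite_weight_nonneg hp0 hp1 _ G) hi
  · rw [if_neg hA]
    exact Finset.sum_nonneg fun i _ => ite_weight_nonneg hp0 hp1 _ G

noncomputable def pairs {n : ℕ} (U : Finset (Fin n)) : Finset (Sym2 (Fin n)) :=
  (⊤ : SimpleGraph (Fin n)).edgeFinset.filter (fun e => ∀ v ∈ e, v ∈ U)

lemma pairs_card_le {n : ℕ} (U : Finset (Fin n)) : (pairs U).card ≤ U.card ^ 2 := by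
  have hsub : pairs U ⊆ (U ×ˢ U).image (fun q => s(q.1, q.2)) := by
    intro e he
    rw [pairs, Finset.mem_filter] at he
    induction e with
    | _ a b =>
      apply Finset.mem_image.mpr
      refine ⟨(a, b), ?_, rfl⟩
      rw [Finset.mem_product]
      exact ⟨he.2 a (Sym2.mem_mk_left a b), he.2 b (Sym2.mem_mk_right a b)⟩
  calc (pairs U).card ≤ ((U ×ˢ U).image (fun q => s(q.1, q.2))).card := Finset.card_le_card hsub
    _ ≤ (U ×ˢ U).card := Finset.card_image_le
    _ = U.card ^ 2 := by rw [Finset.card_product, sq]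

lemma prob_eIn_ge {n : ℕ} {p : ℝ} (hp0 : 0 ≤ p) (hp1 : p ≤ 1) (U : Finset (Fin n)) (t : ℕ) :
    gnpProb n p (fun G => t ≤ eIn G U) ≤ ((pairs U).card.choose t : ℝ) * p ^ t := by
  have hub := gnpProb_union_bound hp0 hp1 ((pairs U).powersetCard t)
    (fun G => t ≤ eIn G U) (fun S G => S ⊆ G.edgeFinset) ?_
  · refine hub.trans ?_
    have heach : ∀ S ∈ (pairs U).powersetCard t,
        gnpProb n p (fun G => S ⊆ G.edgeFinset) = p ^ t := by
      intro S hS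
      rw [Finset.mem_powersetCard] at hS
      rw [gnpProb_superset S (hS.1.trans (Finset.filter_subset _ _)), hS.2]
    rw [Finset.sum_congr rfl heach, Finset.sum_const, Finset.card_powersetCard, nsmul_eq_mul]
  · intro G hG
    have hsub : G.edgeFinset.filter (fun e => ∀ v ∈ e, v ∈ U) ⊆ pairs U := by
      intro e he
      rw [Finset.mem_filter] at he
      rw [pairs, Finset.mem_filter]
      exact ⟨SimpleGraph.edgeFinset_mono le_top he.1, he.2⟩
    obtain ⟨S, hS1, hS2⟩ := Finset.exists_subset_card_eq (α := Sym2 (Fin n))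
      (s := G.edgeFinset.filter (fun e => ∀ v ∈ e, v ∈ U)) (n := t) (by unfold eIn at hG; convert hG using 2; congr)
    refine ⟨S, ?_, hS1.trans (Finset.filter_subset _ _)⟩
    rw [Finset.mem_powersetCard]
    exact ⟨hS1.trans hsub, hS2⟩

lemma term_bound {p k : ℝ} (n u M t : ℕ) (hp0 : 0 < p) (hp1 : p ≤ 1)
    (hn : 1 ≤ n) (hu : 1 ≤ u) (hk : 600 ≤ k) (hM : M ≤ u ^ 2)
    (ht : t = Nat.floor (k * u) + 1)
    (hr : Real.exp 1 * u * p / k ≤ (n : ℝ) ^ (-(0.005) : ℝ)) :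
    (M.choose t : ℝ) * p ^ t ≤ ((n : ℝ) ^ (-(3:ℝ))) ^ u := by
  have hk0 : (0:ℝ) < k := by linarith
  have huR : (1:ℝ) ≤ u := by exact_mod_cast hu
  have hnR : (1:ℝ) ≤ n := by exact_mod_cast hn
  have hn0 : (0:ℝ) ≤ n := by linarith
  have hku : (0:ℝ) < k * u := by positivity
  have htR : k * u < t := by
    rw [ht]; push_cast
    exact Nat.lt_floor_add_one (k * u)
  have ht0 : (0:ℝ) < t := lt_trans hku htR
  set r := Real.exp 1 * u * p / k with hrdef
  have hr0 : 0 < r := by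
    have := Real.exp_pos 1
    positivity
  have hfact : (0:ℝ) < (t.factorial : ℝ) := by exact_mod_cast t.factorial_pos
  -- step 1 : choose * p^t ≤ (M*p)^t / t!
  have h1 : (M.choose t : ℝ) * p ^ t ≤ ((M:ℝ) * p) ^ t / (t.factorial : ℝ) := by
    calc (M.choose t : ℝ) * p ^ t ≤ ((M:ℝ) ^ t / (t.factorial : ℝ)) * p ^ t :=
          mul_le_mul_of_nonneg_right (Nat.choose_le_pow_div t M) (by positivity)
      _ = ((M:ℝ) * p) ^ t / (t.factorial : ℝ) := by rw [mul_pow]; ring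
  -- step 2 : t^t / t! ≤ e^t
  have h2 : ((t:ℝ)) ^ t / (t.factorial : ℝ) ≤ Real.exp 1 ^ t := by
    have hh := Real.pow_div_factorial_le_exp (x := (t:ℝ)) (by positivity) t
    rwa [← Real.exp_one_rpow (t:ℝ), Real.rpow_natCast] at hh
  -- step 3 : (M*p)^t / t! ≤ (e*M*p/t)^t
  have h3 : ((M:ℝ) * p) ^ t / (t.factorial : ℝ) ≤ (Real.exp 1 * M * p / t) ^ t := by
    have htt : (0:ℝ) < (t:ℝ) ^ t := by positivity
    have key : 1 / (t.factorial : ℝ) ≤ Real.exp 1 ^ t / (t:ℝ) ^ t := by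
      rw [div_le_div_iff₀ hfact htt, one_mul]
      calc ((t:ℝ)) ^ t ≤ (((t:ℝ))^t / (t.factorial:ℝ)) * (t.factorial:ℝ) := by
            rw [div_mul_cancel₀]; exact hfact.ne'
        _ ≤ Real.exp 1 ^ t * (t.factorial : ℝ) := by
            exact mul_le_mul_of_nonneg_right h2 hfact.le
    calc ((M:ℝ) * p) ^ t / (t.factorial : ℝ) = ((M:ℝ) * p) ^ t * (1 / (t.factorial : ℝ)) := by
          ring
      _ ≤ ((M:ℝ) * p) ^ t * (Real.exp 1 ^ t / (t:ℝ) ^ t) :=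
          mul_le_mul_of_nonneg_left key (by positivity)
      _ = (Real.exp 1 * M * p / t) ^ t := by
          rw [div_pow, mul_pow, mul_pow]
          ring
  -- step 4 : e*M*p/t ≤ r
  have h4 : Real.exp 1 * M * p / t ≤ r := by
    have e1 : Real.exp 1 * M * p / t ≤ Real.exp 1 * (u^2 : ℕ) * p / t := by
      gcongr
    have e2 : Real.exp 1 * ((u:ℝ)^2) * p / t ≤ Real.exp 1 * ((u:ℝ)^2) * p / (k * u) := by
      gcongr
    have e3 : Real.exp 1 * ((u:ℝ)^2) * p / (k * u) = r := by
      rw [hrdef]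
      field_simp
    calc Real.exp 1 * M * p / t ≤ Real.exp 1 * ((u:ℝ)^2) * p / t := by push_cast at e1 ⊢; exact e1
      _ ≤ r := e2.trans_eq e3
  have h5 : (Real.exp 1 * M * p / t) ^ t ≤ r ^ t := by
    apply pow_le_pow_left₀ _ h4
    have := Real.exp_pos 1
    positivity
  -- step 6 : r ≤ 1
  have hrn : r ≤ (n:ℝ) ^ (-(0.005):ℝ) := hr
  have hr1 : r ≤ 1 :=
    hrn.trans (Real.rpow_le_one_of_one_le_of_nonpos hnR (by norm_num))
  -- step 7 : r^t ≤ (n^{-3})^u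
  have h7 : r ^ t ≤ ((n:ℝ) ^ (-(3:ℝ))) ^ u := by
    have s1 : r ^ t = r ^ ((t:ℝ)) := (Real.rpow_natCast r t).symm
    have s2 : r ^ ((t:ℝ)) ≤ r ^ (k * u) :=
      Real.rpow_le_rpow_of_exponent_ge hr0 hr1 htR.le
    have s3 : r ^ (k * u) ≤ ((n:ℝ) ^ (-(0.005):ℝ)) ^ (k * u) :=
      Real.rpow_le_rpow hr0.le hrn hku.le
    have s4 : ((n:ℝ) ^ (-(0.005):ℝ)) ^ (k * u) = (n:ℝ) ^ ((-(0.005)) * (k * u)) :=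
      (Real.rpow_mul hn0 _ _).symm
    have s5 : (n:ℝ) ^ ((-(0.005)) * (k * u)) ≤ (n:ℝ) ^ ((-(3:ℝ)) * u) := by
      apply Real.rpow_le_rpow_of_exponent_le hnR
      nlinarith
    have s6 : (n:ℝ) ^ ((-(3:ℝ)) * u) = ((n:ℝ) ^ (-(3:ℝ))) ^ u := by
      rw [Real.rpow_mul hn0, Real.rpow_natCast]
    calc r ^ t = r ^ ((t:ℝ)) := s1
      _ ≤ r ^ (k * u) := s2
      _ ≤ ((n:ℝ) ^ (-(0.005):ℝ)) ^ (k * u) := s3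
      _ = (n:ℝ) ^ ((-(0.005)) * (k * u)) := s4
      _ ≤ (n:ℝ) ^ ((-(3:ℝ)) * u) := s5
      _ = ((n:ℝ) ^ (-(3:ℝ))) ^ u := s6
  exact (((h1.trans h3).trans h5).trans h7)

lemma sum_pow_card_le {α : Type*} [Fintype α] (I : Finset (Finset α))
    (hI : ∀ U ∈ I, U.Nonempty) (x : ℝ) (hx : 0 ≤ x) :
    ∑ U ∈ I, x ^ U.card ≤ (1 + x) ^ (Fintype.card α) - 1 := by
  classical
  have hsub : I ⊆ (Finset.univ.powerset (α := α)).erase ∅ := by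
    intro U hU
    exact Finset.mem_erase.mpr ⟨(hI U hU).ne_empty, Finset.mem_powerset.mpr (Finset.subset_univ U)⟩
  have h1 : ∑ U ∈ I, x ^ U.card ≤ ∑ U ∈ (Finset.univ.powerset (α := α)).erase ∅, x ^ U.card :=
    Finset.sum_le_sum_of_subset_of_nonneg hsub (fun U _ _ => by positivity)
  have h2 : ∑ U ∈ Finset.univ.powerset (α := α), x ^ U.card = (x + 1) ^ (Fintype.card α) := by
    have := Finset.prod_add (fun _ : α => x) (fun _ => 1) Finset.univ
    simp only [Finset.prod_const, one_pow, mul_one] at this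
    rw [← this, Finset.card_univ]
  have h3 : x ^ (∅ : Finset α).card
      + ∑ U ∈ (Finset.univ.powerset (α := α)).erase ∅, x ^ U.card
      = ∑ U ∈ Finset.univ.powerset (α := α), x ^ U.card :=
    Finset.add_sum_erase (Finset.univ.powerset (α := α)) (fun U => x ^ U.card)
      (Finset.mem_powerset.mpr (Finset.empty_subset _))
  rw [Finset.card_empty, pow_zero] at h3
  have : (x + 1) ^ (Fintype.card α) = (1 + x) ^ (Fintype.card α) := by rw [add_comm]
  linarith [h1, h2.symm, h3]

lemma ev_log_le : ∀ᶠ n : ℕ in atTop, Real.exp 1 * Real.log n ≤ (n:ℝ) ^ ((0.005):ℝ) := by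
  have h := isLittleO_log_rpow_atTop (show (0:ℝ) < 0.005 by norm_num)
  have h2 := h.def (show (0:ℝ) < (Real.exp 1)⁻¹ by positivity)
  have h3 : ∀ᶠ x : ℝ in atTop, Real.exp 1 * Real.log x ≤ x ^ ((0.005):ℝ) := by
    filter_upwards [h2, eventually_ge_atTop (1:ℝ)] with x hx hx1
    have hlog : 0 ≤ Real.log x := Real.log_nonneg hx1
    have hrp : 0 ≤ x ^ ((0.005):ℝ) := Real.rpow_nonneg (by linarith) _
    rw [Real.norm_eq_abs, Real.norm_eq_abs, abs_of_nonneg hlog, abs_of_nonneg hrp] at hx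
    have he : 0 < Real.exp 1 := Real.exp_pos 1
    calc Real.exp 1 * Real.log x ≤ Real.exp 1 * ((Real.exp 1)⁻¹ * x ^ ((0.005):ℝ)) := by
          exact mul_le_mul_of_nonneg_left hx he.le
      _ = x ^ ((0.005):ℝ) := by field_simp
  exact tendsto_natCast_atTop_atTop.eventually h3

lemma ev_k_large : ∀ᶠ n : ℕ in atTop, (600:ℝ) ≤ (Real.log n) ^ ((3:ℝ)/25) := by
  have h : Tendsto (fun n : ℕ => (Real.log n) ^ ((3:ℝ)/25)) atTop atTop := by
    exact (tendsto_rpow_atTop (by norm_num)).comp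
      (Real.tendsto_log_atTop.comp tendsto_natCast_atTop_atTop)
  exact h.eventually_ge_atTop 600

lemma eIn_empty {V : Type*} [Fintype V] (G : SimpleGraph V) : eIn G (∅ : Finset V) = 0 := by
  unfold eIn
  rw [Finset.card_eq_zero, Finset.filter_eq_empty_iff]
  intro e _
  exact fun hall => Finset.notMem_empty _ (hall e.out.1 (Sym2.out_fst_mem e))

lemma hr_bound {n : ℕ} {p : ℝ} (hn0 : (0:ℝ) < n) (hlog : 0 ≤ Real.log n)
    (hp0 : 0 < p) (hp1 : p ≤ 1)
    (hC3 : Real.exp 1 * Real.log n ≤ (n:ℝ) ^ ((0.005):ℝ))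
    (u : ℝ) (hu0 : 0 ≤ u) (hu : u ≤ (n:ℝ) ^ ((0.11):ℝ) * Real.log n) :
    Real.exp 1 * u * p / (((n:ℝ) * p) ^ ((3:ℝ)/25)) ≤ (n:ℝ) ^ (-(0.005) : ℝ) := by
  have he := Real.exp_pos 1
  set k := ((n:ℝ) * p) ^ ((3:ℝ)/25) with hkdef
  have hk0 : 0 < k := Real.rpow_pos_of_pos (by positivity) _
  set m := (n:ℝ) ^ ((0.11):ℝ) * Real.log n with hmdef
  have step0 : Real.exp 1 * u * p / k ≤ Real.exp 1 * m * p / k := by gcongr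
  refine step0.trans ?_
  rw [div_le_iff₀ hk0]
  have hkeq : k = (n:ℝ) ^ ((3:ℝ)/25) * p ^ ((3:ℝ)/25) := Real.mul_rpow hn0.le hp0.le
  have hpsplit : p ^ ((22:ℝ)/25) * p ^ ((3:ℝ)/25) = p := by
    rw [← Real.rpow_add hp0]; norm_num
  have h115 : (n:ℝ) ^ (-(0.005):ℝ) * (n:ℝ) ^ ((3:ℝ)/25) = (n:ℝ) ^ ((0.115):ℝ) := by
    rw [← Real.rpow_add hn0]; norm_num
  have hmain : Real.exp 1 * Real.log n * (n:ℝ) ^ ((0.11):ℝ) ≤ (n:ℝ) ^ ((0.115):ℝ) := by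
    calc Real.exp 1 * Real.log n * (n:ℝ) ^ ((0.11):ℝ)
        ≤ (n:ℝ) ^ ((0.005):ℝ) * (n:ℝ) ^ ((0.11):ℝ) :=
          mul_le_mul_of_nonneg_right hC3 (Real.rpow_nonneg hn0.le _)
      _ = (n:ℝ) ^ ((0.115):ℝ) := by rw [← Real.rpow_add hn0]; norm_num
  calc Real.exp 1 * m * p
      = (Real.exp 1 * Real.log n * (n:ℝ) ^ ((0.11):ℝ)) * (p ^ ((22:ℝ)/25) * p ^ ((3:ℝ)/25)) := by
        rw [hpsplit, hmdef]; ring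
    _ ≤ ((n:ℝ) ^ ((0.115):ℝ)) * (p ^ ((22:ℝ)/25) * p ^ ((3:ℝ)/25)) := by
        apply mul_le_mul_of_nonneg_right hmain
        positivity
    _ = ((n:ℝ) ^ ((0.115):ℝ)) * p ^ ((22:ℝ)/25) * p ^ ((3:ℝ)/25) := by ring
    _ ≤ ((n:ℝ) ^ ((0.115):ℝ)) * 1 * p ^ ((3:ℝ)/25) := by
        gcongr
        exact Real.rpow_le_one hp0.le hp1 (by norm_num)
    _ = (n:ℝ) ^ (-(0.005):ℝ) * k := by rw [hkeq, ← h115]; ring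

lemma main_per_n {n : ℕ} {p : ℝ} (hp0 : 0 ≤ p) (hp1 : p ≤ 1)
    (hn3 : 3 ≤ n) (hplb : Real.log n / n ≤ p)
    (hC2 : (600:ℝ) ≤ (Real.log n) ^ ((3:ℝ)/25))
    (hC3 : Real.exp 1 * Real.log n ≤ (n:ℝ) ^ ((0.005):ℝ)) :
    2 - Real.exp ((n:ℝ) * (n:ℝ) ^ (-(3:ℝ)))
      ≤ gnpProb n p (fun G => ∀ U : Finset (Fin n),
          (U.card : ℝ) ≤ (n : ℝ) ^ (0.11 : ℝ) * Real.log n →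
          (eIn G U : ℝ) ≤ ((n : ℝ) * p) ^ ((3 : ℝ) / 25) * U.card) := by
  have hn0 : (0:ℝ) < n := by exact_mod_cast (by omega : 0 < n)
  have hn1 : (1:ℝ) < n := by exact_mod_cast (by omega : 1 < n)
  have hlogpos : 0 < Real.log n := Real.log_pos hn1
  have hp0' : 0 < p := lt_of_lt_of_le (by positivity) hplb
  have hnp : Real.log n ≤ (n:ℝ) * p := by
    rw [div_le_iff₀ hn0] at hplb; linarith
  set k := ((n:ℝ) * p) ^ ((3:ℝ)/25) with hkdef
  have hk600 : (600:ℝ) ≤ k :=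
    hC2.trans (Real.rpow_le_rpow hlogpos.le hnp (by norm_num))
  have hk0 : (0:ℝ) < k := by linarith
  set A : SimpleGraph (Fin n) → Prop := fun G => ∀ U : Finset (Fin n),
      (U.card : ℝ) ≤ (n : ℝ) ^ (0.11 : ℝ) * Real.log n →
      (eIn G U : ℝ) ≤ k * U.card with hA
  set x : ℝ := (n:ℝ) ^ (-(3:ℝ)) with hx
  have hx0 : 0 ≤ x := Real.rpow_nonneg hn0.le _
  set I : Finset (Finset (Fin n)) := Finset.univ.powerset.filter
    (fun U => U.Nonempty ∧ (U.card : ℝ) ≤ (n : ℝ) ^ (0.11 : ℝ) * Real.log n) with hI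
  -- union bound
  have hcover : ∀ G, (¬ A G) → ∃ U ∈ I, Nat.floor (k * U.card) + 1 ≤ eIn G U := by
    intro G hG
    simp only [hA] at hG
    push_neg at hG
    obtain ⟨U, hUcard, hUe⟩ := hG
    have hUne : U.Nonempty := by
      rw [Finset.nonempty_iff_ne_empty]
      rintro rfl
      simp only [Finset.card_empty, Nat.cast_zero, mul_zero] at hUe
      have h1 : 0 < eIn G (∅ : Finset (Fin n)) := by exact_mod_cast hUe
      rw [eIn_empty] at h1
      exact lt_irrefl 0 h1
    refine ⟨U, ?_, ?_⟩
    · rw [hI, Finset.mem_filter]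
      exact ⟨Finset.mem_powerset.mpr (Finset.subset_univ U), hUne, hUcard⟩
    · have hfl : Nat.floor (k * U.card) < eIn G U :=
        (Nat.floor_lt (by positivity)).mpr hUe
      omega
  have step1 := gnpProb_union_bound hp0 hp1 I (fun G => ¬ A G)
    (fun U G => Nat.floor (k * U.card) + 1 ≤ eIn G U) hcover
  have step2 : ∀ U ∈ I, gnpProb n p (fun G => Nat.floor (k * U.card) + 1 ≤ eIn G U)
      ≤ x ^ U.card := by
    intro U hU
    rw [hI, Finset.mem_filter] at hU
    refine (prob_eIn_ge hp0 hp1 U _).trans ?_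
    exact term_bound n U.card (pairs U).card (Nat.floor (k * U.card) + 1) hp0' hp1
      (by omega) (Finset.card_pos.mpr hU.2.1) hk600 (pairs_card_le U) rfl
      (hr_bound hn0 hlogpos.le hp0' hp1 hC3 (U.card : ℝ) (by positivity) hU.2.2)
  have step3 : gnpProb n p (fun G => ¬ A G) ≤ (1 + x) ^ n - 1 := by
    calc gnpProb n p (fun G => ¬ A G)
        ≤ ∑ U ∈ I, gnpProb n p (fun G => Nat.floor (k * U.card) + 1 ≤ eIn G U) := step1
      _ ≤ ∑ U ∈ I, x ^ U.card := Finset.sum_le_sum step2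
      _ ≤ (1 + x) ^ (Fintype.card (Fin n)) - 1 := by
          apply sum_pow_card_le I ?_ x hx0
          intro U hU
          rw [hI, Finset.mem_filter] at hU
          exact hU.2.1
      _ = (1 + x) ^ n - 1 := by rw [Fintype.card_fin]
  have step4 : (1 + x) ^ n - 1 ≤ Real.exp ((n:ℝ) * x) - 1 := by
    have h1 : (1 + x) ^ n ≤ Real.exp x ^ n :=
      pow_le_pow_left₀ (by linarith) (by linarith [Real.add_one_le_exp x]) n
    rw [← Real.exp_nat_mul] at h1
    linarith
  have hcompl := gnpProb_add_compl (n := n) (p := p) A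
  have hfin : gnpProb n p (fun G => ¬ A G) ≤ Real.exp ((n:ℝ) * x) - 1 :=
    (step3.trans step4)
  linarith

/-- Claim 4.6: for `p ≥ ln n / n`, w.h.p. every vertex set `U` with `|U| ≤ n^{0.11} ln n`
spans at most `(np)^{3/25} |U|` edges. -/
theorem stmt12 (p : ℕ → ℝ) (hp0 : ∀ n, 0 ≤ p n) (hp1 : ∀ n, p n ≤ 1)
    (hp : ∀ n : ℕ, Real.log n / n ≤ p n) :
    WHP p (fun n G => ∀ U : Finset (Fin n),
      (U.card : ℝ) ≤ (n : ℝ) ^ (0.11 : ℝ) * Real.log n →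
      (eIn G U : ℝ) ≤ ((n : ℝ) * p n) ^ ((3 : ℝ) / 25) * U.card) := by
  unfold WHP
  have hL : Tendsto (fun n : ℕ => 2 - Real.exp ((n:ℝ) * (n:ℝ) ^ (-(3:ℝ)))) atTop (nhds 1) := by
    have h0 : Tendsto (fun n : ℕ => (n:ℝ) * (n:ℝ) ^ (-(3:ℝ))) atTop (nhds 0) := by
      have hx : Tendsto (fun x : ℝ => x ^ (-(2:ℝ))) atTop (nhds 0) :=
        tendsto_rpow_neg_atTop (by norm_num)
      have hn : Tendsto (fun n : ℕ => ((n:ℝ)) ^ (-(2:ℝ))) atTop (nhds 0) :=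
        hx.comp tendsto_natCast_atTop_atTop
      apply hn.congr'
      filter_upwards [eventually_ge_atTop 1] with n hn1
      have hpos : (0:ℝ) < n := by exact_mod_cast (by omega : 0 < n)
      rw [show (-(2:ℝ)) = 1 + (-(3:ℝ)) by norm_num, Real.rpow_add hpos, Real.rpow_one]
    have h2 : Tendsto (fun n : ℕ => Real.exp ((n:ℝ)*(n:ℝ)^(-(3:ℝ)))) atTop (nhds 1) := by
      have := (Real.continuous_exp.tendsto 0).comp h0
      simpa [Function.comp_def] using this
    have h3 := (tendsto_const_nhds (x := (2:ℝ)) (f := atTop (α := ℕ))).sub h2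
    rw [show (2:ℝ) - 1 = 1 by norm_num] at h3; exact h3
  apply tendsto_of_tendsto_of_tendsto_of_le_of_le' hL tendsto_const_nhds
  · filter_upwards [eventually_ge_atTop 3, ev_k_large, ev_log_le] with n hn3 hC2 hC3
    exact main_per_n (hp0 n) (hp1 n) hn3 (hp n) hC2 hC3
  · exact Filter.Eventually.of_forall fun n => gnpProb_le_one (hp0 n) (hp1 n) _
end
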